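/- Let p ∈ [1, ∞), α ∈ (0, 1), and let (X, ‖·‖_X) be a Banach space for which there is K ∈ (0, ∞) such that for every n ∈ ℕ and every h : {−1,1}^n → X, 2^{−n} Σ_{δ∈{−1,1}^n} ‖Σ_{j=1}^n δ_j (∂_j ⊗ I_X) h‖_{L_p(X)}^p ≤ K^p ‖(Δ_{[n]}^{α} ⊗ I_X) h‖_{L_p(X)}^p. Then X is K-convex: there exists K' ∈ (0, ∞) such that for every n ∈ ℕ and every h : {−1,1}^n → X, ‖(Rad ⊗ I_X) h‖_{L_2(X)} ≤ K' ‖h‖_{L_2(X)}, where (Rad ⊗ I_X) h(ε) := Σ_{j=1}^n ε_j ĥ({j}) is the (vector-valued) Rademacher projection. -/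

import Mathlib

open Finset

/-- The `L_p(X)` norm (normalized counting measure) of an `X`-valued function on the
discrete hypercube `{-1,1}^n` (coordinates encoded by `Bool`). -/
noncomputable def lpXnorm {n : ℕ} (p : ℝ) {X : Type*} [NormedAddCommGroup X]
    (h : (Fin n → Bool) → X) : ℝ :=
  ((∑ ε : Fin n → Bool, ‖h ε‖ ^ p) / 2 ^ n) ^ (1 / p)

/-- The Walsh function `W_A(ε) = Π_{j ∈ A} ε_j`. -/
def walsh {n : ℕ} (A : Finset (Fin n)) (ε : Fin n → Bool) : ℝ :=
  ∏ j ∈ A, (if ε j then (1 : ℝ) else -1)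

/-- The `X`-valued Fourier–Walsh coefficient `ĥ(A) = 2^{-n} Σ_ε W_A(ε) h(ε)`. -/
noncomputable def fourierX {n : ℕ} {X : Type*} [NormedAddCommGroup X] [NormedSpace ℝ X]
    (h : (Fin n → Bool) → X) (A : Finset (Fin n)) : X :=
  ((2 : ℝ) ^ n)⁻¹ • ∑ ε : Fin n → Bool, walsh A ε • h ε

/-- The vector-valued hypercube partial derivative `(∂_j ⊗ I_X) h`. -/
noncomputable def dflipX {n : ℕ} {X : Type*} [NormedAddCommGroup X] (j : Fin n)
    (h : (Fin n → Bool) → X) : (Fin n → Bool) → X :=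
  fun ε => h ε - h (Function.update ε j (!ε j))

/-- The vector-valued fractional Laplacian `(Δ_{[n]}^α ⊗ I_X) h = Σ_{A ≠ ∅} |A|^α W_A ĥ(A)`. -/
noncomputable def deltaPowX {n : ℕ} {X : Type*} [NormedAddCommGroup X] [NormedSpace ℝ X]
    (α : ℝ) (h : (Fin n → Bool) → X) : (Fin n → Bool) → X :=
  fun ε => ∑ A : Finset (Fin n),
    if A.Nonempty then (((A.card : ℝ) ^ α) * walsh A ε) • fourierX h A else 0

namespace Cor43

variable {n : ℕ} {X : Type*} [NormedAddCommGroup X] [NormedSpace ℝ X]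

/-! ### Part 1: signs, flips, walsh basics -/

def sgn (b : Bool) : ℝ := if b then 1 else -1

lemma sgn_true : sgn true = 1 := rfl
lemma sgn_false : sgn false = -1 := rfl

lemma sgn_mul_self (b : Bool) : sgn b * sgn b = 1 := by cases b <;> simp [sgn]

lemma abs_sgn (b : Bool) : |sgn b| = 1 := by cases b <;> simp [sgn]

lemma sgn_not (b : Bool) : sgn (!b) = -sgn b := by cases b <;> simp [sgn]

lemma sgn_beq (a b : Bool) : sgn (a == b) = sgn a * sgn b := by
  cases a <;> cases b <;> norm_num [sgn]

lemma walsh_eq_prod_sgn (A : Finset (Fin n)) (ε : Fin n → Bool) :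
    walsh A ε = ∏ j ∈ A, sgn (ε j) := rfl

lemma walsh_singleton (j : Fin n) (ε : Fin n → Bool) : walsh {j} ε = sgn (ε j) := by
  simp [walsh_eq_prod_sgn]

lemma walsh_empty (ε : Fin n → Bool) : walsh (∅ : Finset (Fin n)) ε = 1 := by
  simp [walsh_eq_prod_sgn]

lemma abs_walsh (A : Finset (Fin n)) (ε : Fin n → Bool) : |walsh A ε| = 1 := by
  rw [walsh_eq_prod_sgn, Finset.abs_prod]
  exact Finset.prod_eq_one fun j _ => abs_sgn (ε j)

/-- flip of coordinate `j` -/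
def flip (j : Fin n) (ε : Fin n → Bool) : Fin n → Bool := Function.update ε j (!ε j)

lemma flip_flip (j : Fin n) (ε : Fin n → Bool) : flip j (flip j ε) = ε := by
  funext i
  by_cases hi : i = j
  · subst hi; simp [flip, Function.update]
  · simp [flip, Function.update, hi]

lemma flip_bijective (j : Fin n) : Function.Bijective (flip (n := n) j) :=
  Function.Involutive.bijective (flip_flip j)

lemma sgn_flip_self (j : Fin n) (ε : Fin n → Bool) : sgn (flip j ε j) = -sgn (ε j) := by
  simp [flip, Function.update, sgn_not]

lemma sgn_flip_other {i j : Fin n} (h : i ≠ j) (ε : Fin n → Bool) :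
    sgn (flip j ε i) = sgn (ε i) := by
  simp [flip, Function.update, h]

lemma walsh_flip_mem {A : Finset (Fin n)} {j : Fin n} (hj : j ∈ A) (ε : Fin n → Bool) :
    walsh A (flip j ε) = -walsh A ε := by
  rw [walsh_eq_prod_sgn, walsh_eq_prod_sgn, ← Finset.prod_erase_mul _ _ hj,
    ← Finset.prod_erase_mul _ _ hj, sgn_flip_self]
  have h1 : ∏ i ∈ A.erase j, sgn (flip j ε i) = ∏ i ∈ A.erase j, sgn (ε i) :=
    Finset.prod_congr rfl fun i hi => sgn_flip_other (Finset.ne_of_mem_erase hi) ε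
  rw [h1]; ring

lemma walsh_flip_not_mem {A : Finset (Fin n)} {j : Fin n} (hj : j ∉ A) (ε : Fin n → Bool) :
    walsh A (flip j ε) = walsh A ε := by
  rw [walsh_eq_prod_sgn, walsh_eq_prod_sgn]
  exact Finset.prod_congr rfl fun i hi => sgn_flip_other (fun h => hj (by rwa [← h])) ε

/-- coordinatewise product of sign vectors, in `Bool` encoding -/
def bmul (δ η : Fin n → Bool) : Fin n → Bool := fun j => δ j == η j

lemma sgn_bmul (δ η : Fin n → Bool) (j : Fin n) : sgn (bmul δ η j) = sgn (δ j) * sgn (η j) :=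
  sgn_beq _ _

lemma bmul_bmul (η δ : Fin n → Bool) : bmul (bmul δ η) η = δ := by
  funext j
  cases hδ : δ j <;> cases hη : η j <;> simp [bmul, hδ, hη]

lemma bmul_bijective (η : Fin n → Bool) : Function.Bijective (fun δ => bmul (n := n) δ η) :=
  Function.Involutive.bijective (fun δ => bmul_bmul η δ)

lemma walsh_bmul (A : Finset (Fin n)) (δ η : Fin n → Bool) :
    walsh A (bmul δ η) = walsh A δ * walsh A η := by
  rw [walsh_eq_prod_sgn, walsh_eq_prod_sgn, walsh_eq_prod_sgn, ← Finset.prod_mul_distrib]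
  exact Finset.prod_congr rfl fun j _ => sgn_bmul δ η j

/-! ### Part 2: sum reindexing -/

lemma sum_flip {M : Type*} [AddCommMonoid M] (j : Fin n) (F : (Fin n → Bool) → M) :
    ∑ ε : Fin n → Bool, F (flip j ε) = ∑ ε : Fin n → Bool, F ε :=
  Fintype.sum_bijective (flip j) (flip_bijective j) _ _ fun ε => rfl

lemma sum_bmul {M : Type*} [AddCommMonoid M] (η : Fin n → Bool) (F : (Fin n → Bool) → M) :
    ∑ δ : Fin n → Bool, F (bmul δ η) = ∑ δ : Fin n → Bool, F δ :=
  Fintype.sum_bijective _ (bmul_bijective η) _ _ fun δ => rfl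

lemma card_cube : (Fintype.card (Fin n → Bool)) = 2 ^ n := by
  simp

lemma sum_const_cube (c : ℝ) : ∑ _ε : Fin n → Bool, c = 2 ^ n * c := by
  rw [Finset.sum_const, Finset.card_univ, card_cube, nsmul_eq_mul]
  push_cast
  ring

/-- splitting a cube sum along coordinate `j`: every `δ` is hit twice among `update δ j b`. -/
lemma sum_update_two {M : Type*} [AddCommMonoid M] (j : Fin n) (F : (Fin n → Bool) → M) :
    ∑ δ : Fin n → Bool, ∑ b : Bool, F (Function.update δ j b) =
      ∑ δ : Fin n → Bool, (F δ + F (flip j δ)) := by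
  refine Finset.sum_congr rfl fun δ _ => ?_
  have h1 : Function.update δ j (δ j) = δ := Function.update_eq_self j δ
  have hflip : Function.update δ j (!δ j) = flip j δ := rfl
  rw [Fintype.sum_bool]
  cases hδ : δ j
  · rw [show Function.update δ j true = flip j δ by simp [flip, hδ],
      show Function.update δ j false = δ by
        rw [show false = δ j from hδ.symm]; exact Function.update_eq_self j δ]
    exact add_comm _ _
  · rw [show Function.update δ j false = flip j δ by simp [flip, hδ],
      show Function.update δ j true = δ by
        rw [show true = δ j from hδ.symm]; exact Function.update_eq_self j δ]

/-! ### Part 3: orthogonality -/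

lemma sum_walsh (A : Finset (Fin n)) :
    ∑ ε : Fin n → Bool, walsh A ε = if A = ∅ then (2 : ℝ) ^ n else 0 := by
  by_cases hA : A = ∅
  · simp [hA, walsh_empty, sum_const_cube]
  · simp only [hA, if_false]
    obtain ⟨j, hj⟩ := Finset.nonempty_iff_ne_empty.2 hA
    have h := sum_flip j (fun ε => walsh A ε)
    have h2 : ∑ ε : Fin n → Bool, walsh A (flip j ε) =
        -∑ ε : Fin n → Bool, walsh A ε := by
      rw [← Finset.sum_neg_distrib]
      exact Finset.sum_congr rfl fun ε _ => walsh_flip_mem hj ε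
    linarith [h, h2]

lemma walsh_mul (A B : Finset (Fin n)) (ε : Fin n → Bool) :
    walsh A ε * walsh B ε = walsh (symmDiff A B) ε := by
  classical
  have hA : A = (A \ B) ∪ (A ∩ B) := by
    ext i; simp [Finset.mem_union, Finset.mem_sdiff, Finset.mem_inter]; tauto
  have hB : B = (B \ A) ∪ (A ∩ B) := by
    ext i; simp [Finset.mem_union, Finset.mem_sdiff, Finset.mem_inter]; tauto
  have hdAB : Disjoint (A \ B) (A ∩ B) := by
    simp [Finset.disjoint_left, Finset.mem_sdiff, Finset.mem_inter]; tauto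
  have hdBA : Disjoint (B \ A) (A ∩ B) := by
    simp [Finset.disjoint_left, Finset.mem_sdiff, Finset.mem_inter]; tauto
  have hsd : (symmDiff A B) = (A \ B) ∪ (B \ A) := rfl
  have hdsd : Disjoint (A \ B) (B \ A) := by
    simp [Finset.disjoint_left, Finset.mem_sdiff]; tauto
  have pA : ∏ i ∈ A, sgn (ε i) = (∏ i ∈ A \ B, sgn (ε i)) * ∏ i ∈ A ∩ B, sgn (ε i) := by
    rw [← Finset.prod_union hdAB, ← hA]
  have pB : ∏ i ∈ B, sgn (ε i) = (∏ i ∈ B \ A, sgn (ε i)) * ∏ i ∈ A ∩ B, sgn (ε i) := by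
    rw [← Finset.prod_union hdBA, ← hB]
  rw [walsh_eq_prod_sgn, walsh_eq_prod_sgn, walsh_eq_prod_sgn]
  rw [hsd, Finset.prod_union hdsd, pA, pB]
  have hsq : (∏ i ∈ A ∩ B, sgn (ε i)) * (∏ i ∈ A ∩ B, sgn (ε i)) = 1 := by
    rw [← Finset.prod_mul_distrib]
    exact Finset.prod_eq_one fun i _ => sgn_mul_self (ε i)
  calc ((∏ i ∈ A \ B, sgn (ε i)) * (∏ i ∈ A ∩ B, sgn (ε i))) *
      ((∏ i ∈ B \ A, sgn (ε i)) * (∏ i ∈ A ∩ B, sgn (ε i)))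
      = ((∏ i ∈ A \ B, sgn (ε i)) * (∏ i ∈ B \ A, sgn (ε i))) *
        ((∏ i ∈ A ∩ B, sgn (ε i)) * (∏ i ∈ A ∩ B, sgn (ε i))) := by ring
    _ = (∏ i ∈ A \ B, sgn (ε i)) * (∏ i ∈ B \ A, sgn (ε i)) := by rw [hsq, mul_one]

lemma sum_walsh_mul_walsh (A B : Finset (Fin n)) :
    ∑ ε : Fin n → Bool, walsh A ε * walsh B ε = if A = B then (2 : ℝ) ^ n else 0 := by
  have h : ∀ ε, walsh A ε * walsh B ε = walsh (symmDiff A B) ε := walsh_mul A B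
  rw [Finset.sum_congr rfl fun ε _ => h ε, sum_walsh]
  congr 1
  simp only [eq_iff_iff]
  constructor
  · intro h'
    have := symmDiff_eq_bot.mp (by simpa using h' : symmDiff A B = ⊥)
    exact this
  · intro h'
    subst h'
    simpa using (symmDiff_self A)

/-! ### Part 4: lpXnorm toolkit -/

lemma sum_rpow_nonneg (p : ℝ) (f : (Fin n → Bool) → X) :
    0 ≤ ∑ ε : Fin n → Bool, ‖f ε‖ ^ p :=
  Finset.sum_nonneg fun ε _ => Real.rpow_nonneg (norm_nonneg _) p

lemma lpXnorm_nonneg (p : ℝ) (f : (Fin n → Bool) → X) : 0 ≤ lpXnorm p f :=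
  Real.rpow_nonneg (div_nonneg (sum_rpow_nonneg p f) (by positivity)) _

lemma lpXnorm_rpow {p : ℝ} (hp : 0 < p) (f : (Fin n → Bool) → X) :
    lpXnorm p f ^ p = (∑ ε : Fin n → Bool, ‖f ε‖ ^ p) / 2 ^ n := by
  rw [lpXnorm, ← Real.rpow_mul (div_nonneg (sum_rpow_nonneg p f) (by positivity)),
    one_div_mul_cancel (ne_of_gt hp), Real.rpow_one]

lemma lpXnorm_le_of_rpow_le {p : ℝ} (hp : 0 < p) {f : (Fin n → Bool) → X} {c : ℝ}
    (hc : 0 ≤ c) (h : lpXnorm p f ^ p ≤ c ^ p) : lpXnorm p f ≤ c :=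
  (Real.rpow_le_rpow_iff (lpXnorm_nonneg p f) hc hp).mp h

lemma lpXnorm_mono {p : ℝ} (hp : 0 < p) {Y : Type*} [NormedAddCommGroup Y]
    {f : (Fin n → Bool) → X} {g : (Fin n → Bool) → Y}
    (hfg : ∀ ε, ‖f ε‖ ≤ ‖g ε‖) : lpXnorm p f ≤ lpXnorm p g := by
  apply Real.rpow_le_rpow (div_nonneg (sum_rpow_nonneg p f) (by positivity))
  · apply div_le_div_of_nonneg_right ?_ (by positivity)
    exact Finset.sum_le_sum fun ε _ =>
      Real.rpow_le_rpow (norm_nonneg _) (hfg ε) (le_of_lt hp)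
  · positivity

lemma lpXnorm_congr {p : ℝ} {f g : (Fin n → Bool) → X} (h : ∀ ε, f ε = g ε) :
    lpXnorm p f = lpXnorm p g := by
  rw [show f = g from funext h]

lemma lpXnorm_smul {p : ℝ} (hp : 0 < p) (c : ℝ) (f : (Fin n → Bool) → X) :
    lpXnorm p (fun ε => c • f ε) = |c| * lpXnorm p f := by
  unfold lpXnorm
  have h1 : ∀ ε : Fin n → Bool, ‖c • f ε‖ ^ p = |c| ^ p * ‖f ε‖ ^ p := by
    intro ε
    rw [norm_smul, Real.norm_eq_abs, Real.mul_rpow (abs_nonneg c) (norm_nonneg _)]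
  rw [Finset.sum_congr rfl fun ε _ => h1 ε, ← Finset.mul_sum, mul_div_assoc,
    Real.mul_rpow (by positivity) (div_nonneg (sum_rpow_nonneg p f) (by positivity)),
    ← Real.rpow_mul (abs_nonneg c), mul_one_div_cancel (ne_of_gt hp), Real.rpow_one]

lemma lpXnorm_const {p : ℝ} (hp : 0 < p) (x : X) :
    lpXnorm p (fun _ : Fin n → Bool => x) = ‖x‖ := by
  unfold lpXnorm
  have e : (2:ℝ) ^ n * (‖x‖ ^ p / 2 ^ n) = ‖x‖ ^ p := by field_simp
  rw [sum_const_cube, mul_div_assoc, e, ← Real.rpow_mul (norm_nonneg x),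
    mul_one_div_cancel (ne_of_gt hp), Real.rpow_one]

lemma lpXnorm_add_le {p : ℝ} (hp : 1 ≤ p) (f g : (Fin n → Bool) → X) :
    lpXnorm p (fun ε => f ε + g ε) ≤ lpXnorm p f + lpXnorm p g := by
  have hp0 : 0 < p := lt_of_lt_of_le one_pos hp
  have key : (∑ ε : Fin n → Bool, ‖f ε + g ε‖ ^ p) ^ (1/p) ≤
      (∑ ε : Fin n → Bool, ‖f ε‖ ^ p) ^ (1/p) + (∑ ε : Fin n → Bool, ‖g ε‖ ^ p) ^ (1/p) := by
    refine le_trans ?_ (Real.Lp_add_le_of_nonneg (s := Finset.univ) (f := fun ε => ‖f ε‖)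
      (g := fun ε => ‖g ε‖) hp (fun ε _ => norm_nonneg _) (fun ε _ => norm_nonneg _))
    apply Real.rpow_le_rpow (sum_rpow_nonneg p _) ?_ (by positivity)
    refine Finset.sum_le_sum fun ε _ => ?_
    exact Real.rpow_le_rpow (norm_nonneg _) (norm_add_le _ _) (le_of_lt hp0)
  have h2 : ∀ S : ℝ, 0 ≤ S → (S / 2 ^ n) ^ (1/p) = S ^ (1/p) / ((2:ℝ) ^ n) ^ (1/p) :=
    fun S hS => Real.div_rpow hS (by positivity) _
  unfold lpXnorm
  rw [h2 _ (sum_rpow_nonneg p _), h2 _ (sum_rpow_nonneg p f), h2 _ (sum_rpow_nonneg p g),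
    ← add_div]
  exact div_le_div_of_nonneg_right key (by positivity) |>.trans (le_refl _)

lemma lpXnorm_le_lpXnorm {q r : ℝ} (hq : 0 < q) (hqr : q ≤ r) (f : (Fin n → Bool) → X) :
    lpXnorm q f ≤ lpXnorm r f := by
  rcases eq_or_lt_of_le hqr with h | hlt
  · rw [h]
  have hr : 0 < r := lt_trans hq hlt
  set w : (Fin n → Bool) → ℝ := fun _ => ((2:ℝ) ^ n)⁻¹ with hw
  have hw1 : ∑ ε : Fin n → Bool, w ε = 1 := by
    rw [hw]
    rw [sum_const_cube]
    field_simp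
  have key := Real.arith_mean_le_rpow_mean Finset.univ w (fun ε => ‖f ε‖ ^ q)
    (fun ε _ => by positivity) hw1 (fun ε _ => Real.rpow_nonneg (norm_nonneg _) q)
    (p := r / q) ((one_le_div hq).mpr (le_of_lt hlt))
  have e1 : ∀ ε : Fin n → Bool, (‖f ε‖ ^ q) ^ (r / q) = ‖f ε‖ ^ r := by
    intro ε
    rw [← Real.rpow_mul (norm_nonneg _)]
    congr 1
    field_simp
  have e2 : ∀ z : (Fin n → Bool) → ℝ, ∑ ε, w ε * z ε = (∑ ε : Fin n → Bool, z ε) / 2 ^ n := by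
    intro z
    rw [Finset.sum_div]
    exact Finset.sum_congr rfl fun ε _ => by rw [hw]; ring
  have e3 : ∀ ε : Fin n → Bool, w ε * (‖f ε‖ ^ q) ^ (r/q) = w ε * ‖f ε‖ ^ r := by
    intro ε; rw [e1 ε]
  rw [Finset.sum_congr rfl (fun ε _ => e3 ε), e2, e2, one_div_div] at key
  have hLnn : (0:ℝ) ≤ (∑ ε : Fin n → Bool, ‖f ε‖ ^ q) / 2 ^ n :=
    div_nonneg (sum_rpow_nonneg q f) (by positivity)
  have hRnn : (0:ℝ) ≤ (∑ ε : Fin n → Bool, ‖f ε‖ ^ r) / 2 ^ n :=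
    div_nonneg (sum_rpow_nonneg r f) (by positivity)
  have h3 := Real.rpow_le_rpow hLnn key (by positivity : (0:ℝ) ≤ 1/q)
  rw [← Real.rpow_mul hRnn] at h3
  have e4 : q / r * (1/q) = 1/r := by field_simp
  rw [e4] at h3
  unfold lpXnorm
  exact h3

/-! ### Part 5: noise operator -/

/-- Fourier coefficient of an explicit Fourier sum. -/
lemma fourierX_of_sum (c : Finset (Fin n) → ℝ) (v : Finset (Fin n) → X) (B : Finset (Fin n)) :
    fourierX (fun ε => ∑ A : Finset (Fin n), (c A * walsh A ε) • v A) B = c B • v B := by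
  unfold fourierX
  have e1 : ∀ ε : Fin n → Bool,
      walsh B ε • ∑ A : Finset (Fin n), (c A * walsh A ε) • v A
        = ∑ A : Finset (Fin n), (c A * (walsh A ε * walsh B ε)) • v A := by
    intro ε
    rw [Finset.smul_sum]
    refine Finset.sum_congr rfl fun A _ => ?_
    rw [smul_smul]
    congr 1
    ring
  rw [Finset.sum_congr rfl fun ε _ => e1 ε, Finset.sum_comm]
  have e2 : ∀ A : Finset (Fin n),
      ∑ ε : Fin n → Bool, (c A * (walsh A ε * walsh B ε)) • v A
        = (c A * if A = B then (2:ℝ)^n else 0) • v A := by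
    intro A
    rw [← Finset.sum_smul, ← Finset.mul_sum, sum_walsh_mul_walsh]
  rw [Finset.sum_congr rfl fun A _ => e2 A]
  have e3 : ∀ A : Finset (Fin n),
      (c A * if A = B then (2:ℝ)^n else 0) • v A
        = if A = B then ((2:ℝ)^n * c A) • v A else 0 := by
    intro A
    by_cases h : A = B <;> simp [h, mul_comm]
  rw [Finset.sum_congr rfl fun A _ => e3 A, Finset.sum_ite_eq' Finset.univ B
    (fun A => ((2:ℝ)^n * c A) • v A)]
  simp [smul_smul]

/-- the noise operator with parameter `ρ`, kernel form -/
noncomputable def Tker (ρ : ℝ) (f : (Fin n → Bool) → X) : (Fin n → Bool) → X :=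
  fun ε => ((2:ℝ)^n)⁻¹ •
    ∑ δ : Fin n → Bool, (∏ j : Fin n, (1 + ρ * (sgn (ε j) * sgn (δ j)))) • f δ

lemma kernel_nonneg {ρ : ℝ} (hρ0 : 0 ≤ ρ) (hρ1 : ρ ≤ 1) (ε δ : Fin n → Bool) :
    0 ≤ ∏ j : Fin n, (1 + ρ * (sgn (ε j) * sgn (δ j))) := by
  refine Finset.prod_nonneg fun j _ => ?_
  have h : sgn (ε j) * sgn (δ j) = 1 ∨ sgn (ε j) * sgn (δ j) = -1 := by
    cases hε : ε j <;> cases hδ : δ j <;> simp [sgn] <;> norm_num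
  rcases h with h | h <;> rw [h] <;> nlinarith

lemma kernel_expand (ρ : ℝ) (ε δ : Fin n → Bool) :
    ∏ j : Fin n, (1 + ρ * (sgn (ε j) * sgn (δ j)))
      = ∑ A : Finset (Fin n), ρ ^ A.card * (walsh A ε * walsh A δ) := by
  have e0 : ∀ j : Fin n, (1 + ρ * (sgn (ε j) * sgn (δ j)))
      = (ρ * (sgn (ε j) * sgn (δ j))) + 1 := fun j => by ring
  rw [Finset.prod_congr rfl fun j _ => e0 j,
    Finset.prod_add (fun j => ρ * (sgn (ε j) * sgn (δ j))) (fun _ => (1:ℝ)) Finset.univ]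
  rw [Finset.powerset_univ]
  refine Finset.sum_congr rfl fun A _ => ?_
  rw [Finset.prod_const_one, mul_one, Finset.prod_mul_distrib, Finset.prod_const,
    walsh_eq_prod_sgn, walsh_eq_prod_sgn, Finset.prod_mul_distrib]

lemma kernel_rowsum (ρ : ℝ) (ε : Fin n → Bool) :
    ∑ δ : Fin n → Bool, ∏ j : Fin n, (1 + ρ * (sgn (ε j) * sgn (δ j))) = 2 ^ n := by
  rw [Finset.sum_congr rfl fun δ _ => kernel_expand ρ ε δ, Finset.sum_comm]
  have e1 : ∀ A : Finset (Fin n),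
      ∑ δ : Fin n → Bool, ρ ^ A.card * (walsh A ε * walsh A δ)
        = if A = ∅ then (2:ℝ)^n else 0 := by
    intro A
    have : ∑ δ : Fin n → Bool, ρ ^ A.card * (walsh A ε * walsh A δ)
        = ρ ^ A.card * walsh A ε * ∑ δ : Fin n → Bool, walsh A δ := by
      rw [Finset.mul_sum]
      exact Finset.sum_congr rfl fun δ _ => by ring
    rw [this, sum_walsh]
    by_cases h : A = ∅ <;> simp [h, walsh_empty]
  rw [Finset.sum_congr rfl fun A _ => e1 A, Finset.sum_ite_eq' Finset.univ ∅
    (fun _ => ((2:ℝ)^n))]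
  simp

lemma kernel_symm (ρ : ℝ) (ε δ : Fin n → Bool) :
    ∏ j : Fin n, (1 + ρ * (sgn (ε j) * sgn (δ j)))
      = ∏ j : Fin n, (1 + ρ * (sgn (δ j) * sgn (ε j))) := by
  exact Finset.prod_congr rfl fun j _ => by ring

/-- multiplier form of the noise operator -/
lemma Tker_eq_mult (ρ : ℝ) (f : (Fin n → Bool) → X) (ε : Fin n → Bool) :
    Tker ρ f ε = ∑ A : Finset (Fin n), (ρ ^ A.card * walsh A ε) • fourierX f A := by
  unfold Tker
  rw [Finset.sum_congr rfl fun δ _ => by rw [kernel_expand ρ ε δ]]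
  have e1 : ∀ δ : Fin n → Bool,
      (∑ A : Finset (Fin n), ρ ^ A.card * (walsh A ε * walsh A δ)) • f δ
        = ∑ A : Finset (Fin n), (ρ ^ A.card * walsh A ε) • (walsh A δ • f δ) := by
    intro δ
    rw [Finset.sum_smul]
    exact Finset.sum_congr rfl fun A _ => by rw [smul_smul]; congr 1; ring
  rw [Finset.sum_congr rfl fun δ _ => e1 δ, Finset.sum_comm, Finset.smul_sum]
  refine Finset.sum_congr rfl fun A _ => ?_
  rw [← Finset.smul_sum, fourierX, smul_comm]

/-- `L_p` contractivity of the noise operator, `0 ≤ ρ ≤ 1`, `p ≥ 1`. -/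
lemma Tker_contract {p ρ : ℝ} (hp : 1 ≤ p) (hρ0 : 0 ≤ ρ) (hρ1 : ρ ≤ 1)
    (f : (Fin n → Bool) → X) : lpXnorm p (Tker ρ f) ≤ lpXnorm p f := by
  have hp0 : 0 < p := lt_of_lt_of_le one_pos hp
  set ker : (Fin n → Bool) → (Fin n → Bool) → ℝ :=
    fun ε δ => ∏ j : Fin n, (1 + ρ * (sgn (ε j) * sgn (δ j))) with hker
  have hknn : ∀ ε δ, 0 ≤ ker ε δ := fun ε δ => kernel_nonneg hρ0 hρ1 ε δ
  -- pointwise p-th power bound via Jensen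
  have main : ∀ ε : Fin n → Bool,
      ‖Tker ρ f ε‖ ^ p ≤ ∑ δ : Fin n → Bool, (((2:ℝ)^n)⁻¹ * ker ε δ) * ‖f δ‖ ^ p := by
    intro ε
    have hw1 : ∑ δ : Fin n → Bool, ((2:ℝ)^n)⁻¹ * ker ε δ = 1 := by
      rw [← Finset.mul_sum, hker]
      rw [kernel_rowsum ρ ε]
      field_simp
    have hptw : ‖Tker ρ f ε‖ ≤ ∑ δ : Fin n → Bool, (((2:ℝ)^n)⁻¹ * ker ε δ) * ‖f δ‖ := by
      unfold Tker
      rw [norm_smul]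
      have : ‖∑ δ : Fin n → Bool, ker ε δ • f δ‖ ≤ ∑ δ : Fin n → Bool, ker ε δ * ‖f δ‖ := by
        refine le_trans (norm_sum_le _ _) (Finset.sum_le_sum fun δ _ => ?_)
        rw [norm_smul, Real.norm_eq_abs, abs_of_nonneg (hknn ε δ)]
      calc ‖((2:ℝ)^n)⁻¹‖ * ‖∑ δ : Fin n → Bool, ker ε δ • f δ‖
          ≤ ((2:ℝ)^n)⁻¹ * ∑ δ : Fin n → Bool, ker ε δ * ‖f δ‖ := by
            rw [Real.norm_eq_abs, abs_of_nonneg (by positivity : (0:ℝ) ≤ ((2:ℝ)^n)⁻¹)]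
            exact mul_le_mul_of_nonneg_left this (by positivity)
        _ = ∑ δ : Fin n → Bool, (((2:ℝ)^n)⁻¹ * ker ε δ) * ‖f δ‖ := by
            rw [Finset.mul_sum]; exact Finset.sum_congr rfl fun δ _ => by ring
    have hjen := Real.rpow_arith_mean_le_arith_mean_rpow Finset.univ
      (fun δ => ((2:ℝ)^n)⁻¹ * ker ε δ) (fun δ => ‖f δ‖)
      (fun δ _ => mul_nonneg (by positivity) (hknn ε δ)) hw1
      (fun δ _ => norm_nonneg _) hp
    calc ‖Tker ρ f ε‖ ^ p
        ≤ (∑ δ : Fin n → Bool, (((2:ℝ)^n)⁻¹ * ker ε δ) * ‖f δ‖) ^ p :=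
          Real.rpow_le_rpow (norm_nonneg _) hptw (le_of_lt hp0)
      _ ≤ ∑ δ : Fin n → Bool, (((2:ℝ)^n)⁻¹ * ker ε δ) * ‖f δ‖ ^ p := hjen
  -- sum over ε and use column sums
  have main2 : ∑ ε : Fin n → Bool, ‖Tker ρ f ε‖ ^ p ≤ ∑ δ : Fin n → Bool, ‖f δ‖ ^ p := by
    calc ∑ ε : Fin n → Bool, ‖Tker ρ f ε‖ ^ p
        ≤ ∑ ε : Fin n → Bool, ∑ δ : Fin n → Bool, (((2:ℝ)^n)⁻¹ * ker ε δ) * ‖f δ‖ ^ p :=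
          Finset.sum_le_sum fun ε _ => main ε
      _ = ∑ δ : Fin n → Bool, (((2:ℝ)^n)⁻¹ * ∑ ε : Fin n → Bool, ker ε δ) * ‖f δ‖ ^ p := by
          rw [Finset.sum_comm]
          refine Finset.sum_congr rfl fun δ _ => ?_
          rw [Finset.mul_sum, Finset.sum_mul]
      _ = ∑ δ : Fin n → Bool, ‖f δ‖ ^ p := by
          refine Finset.sum_congr rfl fun δ _ => ?_
          have : ∑ ε : Fin n → Bool, ker ε δ = 2 ^ n := by
            rw [hker]
            rw [Finset.sum_congr rfl fun ε _ => kernel_symm ρ ε δ]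
            exact kernel_rowsum ρ δ
          rw [this, inv_mul_cancel₀ (by positivity : ((2:ℝ)^n) ≠ 0)]
          exact one_mul _
  apply Real.rpow_le_rpow (div_nonneg (sum_rpow_nonneg p _) (by positivity))
    (div_le_div_of_nonneg_right main2 (by positivity)) (by positivity)


lemma even_filter_image (m : ℕ) :
    (Finset.range (2*m+1)).filter (fun k => Even k)
      = (Finset.range (m+1)).image (fun i => 2*i) := by
  ext k
  simp only [Finset.mem_filter, Finset.mem_range, Finset.mem_image]
  constructor
  · rintro ⟨hk, i, hi⟩
    exact ⟨i, by omega, by omega⟩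
  · rintro ⟨i, hi, rfl⟩
    exact ⟨by omega, ⟨i, by omega⟩⟩

lemma sum_even_expand (m : ℕ) (g : ℕ → ℝ) :
    ∑ k ∈ Finset.range (2*m+1), (1 + (-1:ℝ)^k) * g k
      = 2 * ∑ i ∈ Finset.range (m+1), g (2*i) := by
  rw [← Finset.sum_filter_add_sum_filter_not (Finset.range (2*m+1)) (fun k => Even k)]
  have h1 : ∀ k ∈ (Finset.range (2*m+1)).filter (fun k => Even k),
      (1 + (-1:ℝ)^k) * g k = 2 * g k := by
    intro k hk
    have hke : Even k := (Finset.mem_filter.mp hk).2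
    rw [hke.neg_one_pow]
    ring
  have h2 : ∀ k ∈ (Finset.range (2*m+1)).filter (fun k => ¬ Even k),
      (1 + (-1:ℝ)^k) * g k = 0 := by
    intro k hk
    have hko : Odd k := Nat.not_even_iff_odd.mp (Finset.mem_filter.mp hk).2
    rw [hko.neg_one_pow]
    ring
  rw [Finset.sum_congr rfl h1, Finset.sum_congr rfl h2, Finset.sum_const_zero, add_zero,
    even_filter_image, Finset.sum_image (by intro a _ b _ h; have h' : 2*a = 2*b := h; omega), ← Finset.mul_sum]

lemma neg_one_pow_sub (m k : ℕ) (hk : k ≤ 2*m) : (-1:ℝ)^(2*m - k) = (-1:ℝ)^k := by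
  rcases Nat.even_or_odd k with he | ho
  · have h2 : Even (2*m - k) := (Nat.even_sub hk).mpr (by simp [he, even_two_mul m])
    rw [h2.neg_one_pow, he.neg_one_pow]
  · have h2 : Odd (2*m - k) := by
      have : ¬ Even (2*m - k) := by
        rw [Nat.even_sub hk]
        simp [even_two_mul m, Nat.not_even_iff_odd.mpr ho]
      exact Nat.not_even_iff_odd.mp this
    rw [h2.neg_one_pow, ho.neg_one_pow]

/-- the two-point hypercontractive inequality with `σ = 1/(2m)` -/
lemma two_point (m : ℕ) (hm : 1 ≤ m) (a c : ℝ) :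
    (a + (2*(m:ℝ))⁻¹ * c) ^ (2*m) + (a - (2*(m:ℝ))⁻¹ * c) ^ (2*m)
      ≤ 2 * (a^2 + c^2) ^ m := by
  have hm' : (0:ℝ) < (m:ℝ) := by exact_mod_cast hm
  set σ : ℝ := (2*(m:ℝ))⁻¹ with hσ
  have hσ0 : 0 < σ := by positivity
  set x : ℝ := σ * c with hx
  -- expansion
  have e1 : (a + x) ^ (2*m) + (a - x) ^ (2*m)
      = ∑ k ∈ Finset.range (2*m+1),
          (1 + (-1:ℝ)^k) * (a ^ k * x ^ (2*m - k) * (Nat.choose (2*m) k : ℝ)) := by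
    rw [add_pow, sub_eq_add_neg, add_pow, ← Finset.sum_add_distrib]
    refine Finset.sum_congr rfl fun k hk => ?_
    have hk2m : k ≤ 2*m := by have := Finset.mem_range.mp hk; omega
    rw [neg_pow x (2*m - k), neg_one_pow_sub m k hk2m]
    ring
  rw [e1, sum_even_expand]
  have e2 : (a^2 + c^2) ^ m
      = ∑ i ∈ Finset.range (m+1), (a^2) ^ i * (c^2) ^ (m - i) * (Nat.choose m i : ℝ) := by
    rw [add_pow]
  rw [e2]
  refine mul_le_mul_of_nonneg_left (Finset.sum_le_sum fun i hi => ?_) (by norm_num)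
  have him : i ≤ m := by have := Finset.mem_range.mp hi; omega
  -- termwise
  have t1 : x ^ (2*m - 2*i) = σ ^ (2*(m-i)) * (c^2) ^ (m-i) := by
    rw [hx, mul_pow, ← pow_mul]
    congr 2 <;> omega
  have t2 : a ^ (2*i) = (a^2) ^ i := by rw [← pow_mul]
  have hchoose : (Nat.choose (2*m) (2*i) : ℝ) * σ ^ (2*(m-i)) ≤ (Nat.choose m i : ℝ) := by
    have hsym : Nat.choose (2*m) (2*i) = Nat.choose (2*m) (2*m - 2*i) :=
      (Nat.choose_symm (by omega)).symm
    have hle : (Nat.choose (2*m) (2*m - 2*i) : ℝ) ≤ ((2*m : ℕ) : ℝ) ^ (2*m - 2*i) := by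
      exact_mod_cast Nat.choose_le_pow (2*m) (2*m - 2*i)
    have hone : (1:ℝ) ≤ (Nat.choose m i : ℝ) := by
      exact_mod_cast Nat.succ_le_of_lt (Nat.choose_pos him)
    have he : 2*(m-i) = 2*m - 2*i := by omega
    have key : (Nat.choose (2*m) (2*i) : ℝ) * σ ^ (2*(m-i)) ≤ 1 := by
      have hbpos : (0:ℝ) < (2*(m:ℝ)) ^ (2*m - 2*i) := by positivity
      rw [hσ, he, inv_pow, ← div_eq_mul_inv, div_le_one hbpos, hsym]
      calc (Nat.choose (2*m) (2*m-2*i) : ℝ) ≤ ((2*m : ℕ):ℝ) ^ (2*m-2*i) := hle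
        _ = (2*(m:ℝ)) ^ (2*m-2*i) := by push_cast; ring
    exact key.trans hone
  calc a ^ (2*i) * x ^ (2*m - 2*i) * (Nat.choose (2*m) (2*i) : ℝ)
      = ((Nat.choose (2*m) (2*i) : ℝ) * σ ^ (2*(m-i))) * ((a^2)^i * (c^2)^(m-i)) := by
        rw [t1, t2]; ring
    _ ≤ (Nat.choose m i : ℝ) * ((a^2)^i * (c^2)^(m-i)) := by
        refine mul_le_mul_of_nonneg_right hchoose ?_
        positivity
    _ = (a^2) ^ i * (c^2) ^ (m - i) * (Nat.choose m i : ℝ) := by ring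

/-! ### Part 6: hypercontractivity -/

def merge (s : Finset (Fin n)) (δ ε : Fin n → Bool) : Fin n → Bool :=
  fun i => if i ∈ s then δ i else ε i

noncomputable def Mop (σ : ℝ) (j : Fin n) (u : (Fin n → Bool) → ℝ) : (Fin n → Bool) → ℝ :=
  fun ε => ((1+σ)/2) * u ε + ((1-σ)/2) * u (flip j ε)

noncomputable def TS (σ : ℝ) (s : Finset (Fin n)) (u : (Fin n → Bool) → ℝ) :
    (Fin n → Bool) → ℝ :=
  fun ε => ((2:ℝ)^n)⁻¹ * ∑ δ : Fin n → Bool,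
    (∏ j ∈ s, (1 + σ * (sgn (ε j) * sgn (δ j)))) * u (merge s δ ε)

noncomputable def AS (s : Finset (Fin n)) (u : (Fin n → Bool) → ℝ) : (Fin n → Bool) → ℝ :=
  fun ε => Real.sqrt (((2:ℝ)^n)⁻¹ * ∑ δ : Fin n → Bool, (u (merge s δ ε))^2)

noncomputable def Aj (j : Fin n) (v : (Fin n → Bool) → ℝ) : (Fin n → Bool) → ℝ :=
  fun ε => Real.sqrt (((v ε)^2 + (v (flip j ε))^2)/2)

lemma merge_empty (δ ε : Fin n → Bool) : merge ∅ δ ε = ε := funext fun i => by simp [merge]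

lemma merge_univ (δ ε : Fin n → Bool) : merge Finset.univ δ ε = δ :=
  funext fun i => by simp [merge]

lemma merge_insert_update (j : Fin n) (s : Finset (Fin n)) (δ ε : Fin n → Bool) (b : Bool) :
    merge (insert j s) (Function.update δ j b) ε = Function.update (merge s δ ε) j b := by
  funext i
  by_cases hij : i = j
  · subst hij; simp [merge, Function.update]
  · simp [merge, Function.update, hij, Finset.mem_insert]

lemma merge_update_right {j : Fin n} {s : Finset (Fin n)} (hj : j ∉ s) (δ ε : Fin n → Bool)
    (b : Bool) : Function.update (merge s δ ε) j b = merge s δ (Function.update ε j b) := by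
  funext i
  by_cases hij : i = j
  · subst hij
    simp [merge, Function.update, hj]
  · simp [merge, Function.update, hij]

lemma merge_apply_not_mem {j : Fin n} {s : Finset (Fin n)} (hj : j ∉ s) (δ ε : Fin n → Bool) :
    merge s δ ε j = ε j := by simp [merge, hj]

lemma flip_merge {j : Fin n} {s : Finset (Fin n)} (hj : j ∉ s) (δ ε : Fin n → Bool) :
    flip j (merge s δ ε) = merge s δ (flip j ε) := by
  show Function.update (merge s δ ε) j (!(merge s δ ε j)) = _
  rw [merge_apply_not_mem hj, merge_update_right hj]
  rfl

lemma kerS_update {σ : ℝ} {j : Fin n} {s : Finset (Fin n)} (hj : j ∉ s)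
    (ε δ : Fin n → Bool) (b : Bool) :
    ∏ i ∈ s, (1 + σ * (sgn (ε i) * sgn (Function.update δ j b i)))
      = ∏ i ∈ s, (1 + σ * (sgn (ε i) * sgn (δ i))) := by
  refine Finset.prod_congr rfl fun i hi => ?_
  have hij : i ≠ j := fun h => hj (h ▸ hi)
  rw [Function.update_of_ne hij]

lemma TS_empty (σ : ℝ) (u : (Fin n → Bool) → ℝ) (ε : Fin n → Bool) : TS σ ∅ u ε = u ε := by
  unfold TS
  rw [Finset.sum_congr rfl fun δ _ => by rw [Finset.prod_empty, one_mul, merge_empty]]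
  rw [sum_const_cube (u ε)]
  field_simp

lemma AS_empty (u : (Fin n → Bool) → ℝ) (ε : Fin n → Bool) : AS ∅ u ε = |u ε| := by
  unfold AS
  rw [Finset.sum_congr rfl fun δ _ => by rw [merge_empty]]
  rw [sum_const_cube ((u ε)^2)]
  rw [show ((2:ℝ)^n)⁻¹ * ((2:ℝ)^n * (u ε)^2) = (u ε)^2 by field_simp]
  exact Real.sqrt_sq_eq_abs (u ε)

lemma AS_nonneg (s : Finset (Fin n)) (u : (Fin n → Bool) → ℝ) (ε : Fin n → Bool) :
    0 ≤ AS s u ε := Real.sqrt_nonneg _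

lemma Aj_nonneg (j : Fin n) (v : (Fin n → Bool) → ℝ) (ε : Fin n → Bool) :
    0 ≤ Aj j v ε := Real.sqrt_nonneg _

lemma TS_insert {σ : ℝ} {j : Fin n} {s : Finset (Fin n)} (hj : j ∉ s)
    (u : (Fin n → Bool) → ℝ) (ε : Fin n → Bool) :
    TS σ (insert j s) u ε = TS σ s (Mop σ j u) ε := by
  unfold TS
  congr 1
  -- reduce to sum identity
  set F : (Fin n → Bool) → ℝ := fun δ =>
    (∏ i ∈ insert j s, (1 + σ * (sgn (ε i) * sgn (δ i)))) * u (merge (insert j s) δ ε) with hF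
  have key : ∀ δ : Fin n → Bool, ∑ b : Bool, F (Function.update δ j b)
      = 2 * ((∏ i ∈ s, (1 + σ * (sgn (ε i) * sgn (δ i)))) * Mop σ j u (merge s δ ε)) := by
    intro δ
    have eF : ∀ b : Bool, F (Function.update δ j b)
        = ((1 + σ * (sgn (ε j) * sgn b)) * ∏ i ∈ s, (1 + σ * (sgn (ε i) * sgn (δ i))))
            * u (merge s δ (Function.update ε j b)) := by
      intro b
      simp only [hF]
      have h1 : ∏ i ∈ insert j s, (1 + σ * (sgn (ε i) * sgn ((Function.update δ j b) i)))
          = (1 + σ * (sgn (ε j) * sgn b)) *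
              ∏ i ∈ s, (1 + σ * (sgn (ε i) * sgn (δ i))) := by
        rw [Finset.prod_insert hj, Function.update_self, kerS_update hj]
      have h2 : merge (insert j s) (Function.update δ j b) ε
          = merge s δ (Function.update ε j b) := by
        rw [merge_insert_update, merge_update_right hj]
      rw [h1, h2]
    rw [Fintype.sum_bool, eF true, eF false]
    have hMop : Mop σ j u (merge s δ ε)
        = ((1+σ)/2) * u (merge s δ ε) + ((1-σ)/2) * u (merge s δ (flip j ε)) := by
      unfold Mop
      rw [flip_merge hj]
    rw [hMop]
    cases hε : ε j
    · have et : Function.update ε j true = flip j ε := by simp [flip, hε]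
      have ef : Function.update ε j false = ε := by
        rw [show false = ε j from hε.symm]; exact Function.update_eq_self j ε
      rw [et, ef]
      simp only [sgn_true, sgn_false]
      ring
    · have et : Function.update ε j true = ε := by
        rw [show true = ε j from hε.symm]; exact Function.update_eq_self j ε
      have ef : Function.update ε j false = flip j ε := by simp [flip, hε]
      rw [et, ef]
      simp only [sgn_true, sgn_false]
      ring
  have h2 := sum_update_two j F
  have h3 : ∑ δ : Fin n → Bool, (F δ + F (flip j δ)) = 2 * ∑ δ : Fin n → Bool, F δ := by
    rw [Finset.sum_add_distrib, sum_flip j F]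
    ring
  have h4 : ∑ δ : Fin n → Bool, ∑ b : Bool, F (Function.update δ j b)
      = 2 * ∑ δ : Fin n → Bool,
          (∏ i ∈ s, (1 + σ * (sgn (ε i) * sgn (δ i)))) * Mop σ j u (merge s δ ε) := by
    rw [Finset.sum_congr rfl fun δ _ => key δ, ← Finset.mul_sum]
  have h5 : (2:ℝ) * ∑ δ : Fin n → Bool, F δ
      = 2 * ∑ δ : Fin n → Bool,
          (∏ i ∈ s, (1 + σ * (sgn (ε i) * sgn (δ i)))) * Mop σ j u (merge s δ ε) := by
    rw [← h3, ← h2, h4]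
  have := mul_left_cancel₀ (by norm_num : (2:ℝ) ≠ 0) h5
  exact this

lemma AS_insert {j : Fin n} {s : Finset (Fin n)} (hj : j ∉ s)
    (u : (Fin n → Bool) → ℝ) (ε : Fin n → Bool) :
    AS (insert j s) u ε = Aj j (AS s u) ε := by
  have hAS : ∀ η : Fin n → Bool, (AS s u η)^2
      = ((2:ℝ)^n)⁻¹ * ∑ δ : Fin n → Bool, (u (merge s δ η))^2 := by
    intro η
    unfold AS
    rw [Real.sq_sqrt]
    positivity
  have key : ∀ δ : Fin n → Bool,
      ∑ b : Bool, (fun δ' => (u (merge (insert j s) δ' ε))^2) (Function.update δ j b)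
        = (u (merge s δ ε))^2 + (u (merge s δ (flip j ε)))^2 := by
    intro δ
    have eG : ∀ b : Bool, (u (merge (insert j s) (Function.update δ j b) ε))^2
        = (u (merge s δ (Function.update ε j b)))^2 := by
      intro b
      rw [merge_insert_update, merge_update_right hj]
    rw [Fintype.sum_bool]
    simp only []
    rw [eG true, eG false]
    cases hε : ε j
    · have et : Function.update ε j true = flip j ε := by simp [flip, hε]
      have ef : Function.update ε j false = ε := by
        rw [show false = ε j from hε.symm]; exact Function.update_eq_self j ε
      rw [et, ef]
      ring
    · have et : Function.update ε j true = ε := by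
        rw [show true = ε j from hε.symm]; exact Function.update_eq_self j ε
      have ef : Function.update ε j false = flip j ε := by simp [flip, hε]
      rw [et, ef]
  have h2 := sum_update_two j (fun δ' => (u (merge (insert j s) δ' ε))^2)
  have h3 : ∑ δ : Fin n → Bool,
      ((fun δ' => (u (merge (insert j s) δ' ε))^2) δ
        + (fun δ' => (u (merge (insert j s) δ' ε))^2) (flip j δ))
      = 2 * ∑ δ : Fin n → Bool, (u (merge (insert j s) δ ε))^2 := by
    rw [Finset.sum_add_distrib, sum_flip j (fun δ' => (u (merge (insert j s) δ' ε))^2)]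
    ring
  have h4 : 2 * ∑ δ : Fin n → Bool, (u (merge (insert j s) δ ε))^2
      = (∑ δ : Fin n → Bool, (u (merge s δ ε))^2)
        + ∑ δ : Fin n → Bool, (u (merge s δ (flip j ε)))^2 := by
    rw [← h3, ← h2, Finset.sum_congr rfl fun δ _ => key δ, Finset.sum_add_distrib]
  have harg : ((2:ℝ)^n)⁻¹ * ∑ δ : Fin n → Bool, (u (merge (insert j s) δ ε))^2
      = ((AS s u ε)^2 + (AS s u (flip j ε))^2)/2 := by
    rw [hAS ε, hAS (flip j ε)]
    have h5 : ∑ δ : Fin n → Bool, (u (merge (insert j s) δ ε))^2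
        = ((∑ δ : Fin n → Bool, (u (merge s δ ε))^2)
            + ∑ δ : Fin n → Bool, (u (merge s δ (flip j ε)))^2)/2 := by
      linarith [h4]
    rw [h5]
    ring
  show Real.sqrt (((2:ℝ)^n)⁻¹ * ∑ δ : Fin n → Bool, (u (merge (insert j s) δ ε))^2)
    = Real.sqrt (((AS s u ε)^2 + (AS s u (flip j ε))^2)/2)
  rw [harg]

lemma Mop_AS {σ : ℝ} (hσ0 : 0 ≤ σ) (hσ1 : σ ≤ 1) {j : Fin n} {s : Finset (Fin n)} (hj : j ∉ s)
    (u : (Fin n → Bool) → ℝ) (ε : Fin n → Bool) :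
    AS s (Mop σ j u) ε ≤ Mop σ j (AS s u) ε := by
  have ha0 : (0:ℝ) ≤ (1+σ)/2 := by linarith
  have hb0 : (0:ℝ) ≤ (1-σ)/2 := by linarith
  have hXnn : (0:ℝ) ≤ ((2:ℝ)^n)⁻¹ * ∑ δ : Fin n → Bool, (u (merge s δ ε))^2 := by positivity
  have hYnn : (0:ℝ) ≤ ((2:ℝ)^n)⁻¹ * ∑ δ : Fin n → Bool, (u (merge s δ (flip j ε)))^2 := by
    positivity
  have hexp : ((2:ℝ)^n)⁻¹ * ∑ δ : Fin n → Bool, (Mop σ j u (merge s δ ε))^2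
      = ((1+σ)/2)^2 * (((2:ℝ)^n)⁻¹ * ∑ δ : Fin n → Bool, (u (merge s δ ε))^2)
        + 2*((1+σ)/2)*((1-σ)/2) * (((2:ℝ)^n)⁻¹ *
            ∑ δ : Fin n → Bool, (u (merge s δ ε)) * (u (merge s δ (flip j ε))))
        + ((1-σ)/2)^2 * (((2:ℝ)^n)⁻¹ *
            ∑ δ : Fin n → Bool, (u (merge s δ (flip j ε)))^2) := by
    have e1 : ∀ δ : Fin n → Bool, (Mop σ j u (merge s δ ε))^2
        = ((1+σ)/2)^2 * (u (merge s δ ε))^2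
          + 2*((1+σ)/2)*((1-σ)/2)*((u (merge s δ ε)) * (u (merge s δ (flip j ε))))
          + ((1-σ)/2)^2 * (u (merge s δ (flip j ε)))^2 := by
      intro δ
      have hM : Mop σ j u (merge s δ ε)
          = ((1+σ)/2) * u (merge s δ ε) + ((1-σ)/2) * u (merge s δ (flip j ε)) := by
        unfold Mop
        rw [flip_merge hj]
      rw [hM]
      ring
    rw [Finset.sum_congr rfl fun δ _ => e1 δ, Finset.sum_add_distrib, Finset.sum_add_distrib,
      ← Finset.mul_sum, ← Finset.mul_sum, ← Finset.mul_sum]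
    ring
  have hCS : ((2:ℝ)^n)⁻¹ * ∑ δ : Fin n → Bool, (u (merge s δ ε)) * (u (merge s δ (flip j ε)))
      ≤ Real.sqrt (((2:ℝ)^n)⁻¹ * ∑ δ : Fin n → Bool, (u (merge s δ ε))^2)
        * Real.sqrt (((2:ℝ)^n)⁻¹ * ∑ δ : Fin n → Bool, (u (merge s δ (flip j ε)))^2) := by
    have h1 := Finset.sum_mul_sq_le_sq_mul_sq Finset.univ (fun δ => u (merge s δ ε))
      (fun δ => u (merge s δ (flip j ε)))
    have h2 : (((2:ℝ)^n)⁻¹ * ∑ δ : Fin n → Bool, (u (merge s δ ε)) * (u (merge s δ (flip j ε))))^2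
        ≤ (((2:ℝ)^n)⁻¹ * ∑ δ : Fin n → Bool, (u (merge s δ ε))^2)
          * (((2:ℝ)^n)⁻¹ * ∑ δ : Fin n → Bool, (u (merge s δ (flip j ε)))^2) := by
      have hcc : (0:ℝ) ≤ (((2:ℝ)^n)⁻¹)^2 := by positivity
      calc (((2:ℝ)^n)⁻¹ * ∑ δ : Fin n → Bool, (u (merge s δ ε)) * (u (merge s δ (flip j ε))))^2
          = (((2:ℝ)^n)⁻¹)^2 *
              (∑ δ : Fin n → Bool, (u (merge s δ ε)) * (u (merge s δ (flip j ε))))^2 := by ring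
        _ ≤ (((2:ℝ)^n)⁻¹)^2 * ((∑ δ : Fin n → Bool, (u (merge s δ ε))^2)
              * ∑ δ : Fin n → Bool, (u (merge s δ (flip j ε)))^2) :=
            mul_le_mul_of_nonneg_left h1 hcc
        _ = (((2:ℝ)^n)⁻¹ * ∑ δ : Fin n → Bool, (u (merge s δ ε))^2)
              * (((2:ℝ)^n)⁻¹ * ∑ δ : Fin n → Bool, (u (merge s δ (flip j ε)))^2) := by ring
    calc ((2:ℝ)^n)⁻¹ * ∑ δ : Fin n → Bool, (u (merge s δ ε)) * (u (merge s δ (flip j ε)))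
        ≤ |((2:ℝ)^n)⁻¹ * ∑ δ : Fin n → Bool, (u (merge s δ ε)) * (u (merge s δ (flip j ε)))| :=
          le_abs_self _
      _ = Real.sqrt ((((2:ℝ)^n)⁻¹ *
            ∑ δ : Fin n → Bool, (u (merge s δ ε)) * (u (merge s δ (flip j ε))))^2) :=
          (Real.sqrt_sq_eq_abs _).symm
      _ ≤ Real.sqrt ((((2:ℝ)^n)⁻¹ * ∑ δ : Fin n → Bool, (u (merge s δ ε))^2)
            * (((2:ℝ)^n)⁻¹ * ∑ δ : Fin n → Bool, (u (merge s δ (flip j ε)))^2)) :=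
          Real.sqrt_le_sqrt h2
      _ = _ := Real.sqrt_mul hXnn _
  have hfinal : ((2:ℝ)^n)⁻¹ * ∑ δ : Fin n → Bool, (Mop σ j u (merge s δ ε))^2
      ≤ (((1+σ)/2) * Real.sqrt (((2:ℝ)^n)⁻¹ * ∑ δ : Fin n → Bool, (u (merge s δ ε))^2)
          + ((1-σ)/2) * Real.sqrt (((2:ℝ)^n)⁻¹ *
              ∑ δ : Fin n → Bool, (u (merge s δ (flip j ε)))^2))^2 := by
    rw [hexp]
    nlinarith [hCS, Real.sqrt_nonneg (((2:ℝ)^n)⁻¹ * ∑ δ : Fin n → Bool, (u (merge s δ ε))^2),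
      Real.sqrt_nonneg (((2:ℝ)^n)⁻¹ * ∑ δ : Fin n → Bool, (u (merge s δ (flip j ε)))^2),
      Real.sq_sqrt hXnn, Real.sq_sqrt hYnn, mul_nonneg ha0 hb0]
  have hRHSnn : (0:ℝ) ≤ ((1+σ)/2) * Real.sqrt (((2:ℝ)^n)⁻¹ *
        ∑ δ : Fin n → Bool, (u (merge s δ ε))^2)
      + ((1-σ)/2) * Real.sqrt (((2:ℝ)^n)⁻¹ *
        ∑ δ : Fin n → Bool, (u (merge s δ (flip j ε)))^2) := by
    have := Real.sqrt_nonneg (((2:ℝ)^n)⁻¹ * ∑ δ : Fin n → Bool, (u (merge s δ ε))^2)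
    have := Real.sqrt_nonneg (((2:ℝ)^n)⁻¹ * ∑ δ : Fin n → Bool, (u (merge s δ (flip j ε)))^2)
    nlinarith
  calc AS s (Mop σ j u) ε
      = Real.sqrt (((2:ℝ)^n)⁻¹ * ∑ δ : Fin n → Bool, (Mop σ j u (merge s δ ε))^2) := rfl
    _ ≤ Real.sqrt ((((1+σ)/2) * Real.sqrt (((2:ℝ)^n)⁻¹ *
            ∑ δ : Fin n → Bool, (u (merge s δ ε))^2)
          + ((1-σ)/2) * Real.sqrt (((2:ℝ)^n)⁻¹ *
            ∑ δ : Fin n → Bool, (u (merge s δ (flip j ε)))^2))^2) := Real.sqrt_le_sqrt hfinal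
    _ = ((1+σ)/2) * Real.sqrt (((2:ℝ)^n)⁻¹ * ∑ δ : Fin n → Bool, (u (merge s δ ε))^2)
          + ((1-σ)/2) * Real.sqrt (((2:ℝ)^n)⁻¹ *
            ∑ δ : Fin n → Bool, (u (merge s δ (flip j ε)))^2) := by
        rw [Real.sqrt_sq_eq_abs]
        exact abs_of_nonneg hRHSnn
    _ = Mop σ j (AS s u) ε := rfl

lemma Mop_pow_sum (m : ℕ) (hm : 1 ≤ m) (j : Fin n) (v : (Fin n → Bool) → ℝ) :
    ∑ ε : Fin n → Bool, (Mop ((2*(m:ℝ))⁻¹) j v ε)^(2*m)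
      ≤ ∑ ε : Fin n → Bool, (Aj j v ε)^(2*m) := by
  set σ : ℝ := (2*(m:ℝ))⁻¹ with hσ
  have havg : ∑ ε : Fin n → Bool, (Mop σ j v ε)^(2*m)
      = (∑ ε : Fin n → Bool, ((Mop σ j v ε)^(2*m) + (Mop σ j v (flip j ε))^(2*m)))/2 := by
    rw [Finset.sum_add_distrib, sum_flip j (fun ε => (Mop σ j v ε)^(2*m))]
    ring
  rw [havg]
  rw [div_le_iff₀ (by norm_num : (0:ℝ) < 2)]
  have hpt : ∀ ε : Fin n → Bool, (Mop σ j v ε)^(2*m) + (Mop σ j v (flip j ε))^(2*m)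
      ≤ 2 * (Aj j v ε)^(2*m) := by
    intro ε
    have hc : Mop σ j v ε = (v ε + v (flip j ε))/2 + σ * ((v ε - v (flip j ε))/2) := by
      unfold Mop; ring
    have hd : Mop σ j v (flip j ε)
        = (v ε + v (flip j ε))/2 - σ * ((v ε - v (flip j ε))/2) := by
      unfold Mop
      rw [flip_flip]
      ring
    have hAj : (Aj j v ε)^(2*m)
        = (((v ε + v (flip j ε))/2)^2 + ((v ε - v (flip j ε))/2)^2)^m := by
      have h1 : (Aj j v ε)^(2*m) = ((Aj j v ε)^2)^m := by rw [← pow_mul]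
      have h2 : (Aj j v ε)^2 = ((v ε)^2 + (v (flip j ε))^2)/2 := by
        unfold Aj
        rw [Real.sq_sqrt]
        positivity
      rw [h1, h2]
      congr 1
      ring
    rw [hc, hd, hAj]
    exact two_point m hm _ _
  calc ∑ ε : Fin n → Bool, ((Mop σ j v ε)^(2*m) + (Mop σ j v (flip j ε))^(2*m))
      ≤ ∑ ε : Fin n → Bool, 2 * (Aj j v ε)^(2*m) := Finset.sum_le_sum fun ε _ => hpt ε
    _ = (∑ ε : Fin n → Bool, (Aj j v ε)^(2*m)) * 2 := by
        rw [Finset.sum_mul]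
        exact Finset.sum_congr rfl fun ε _ => by ring

lemma TS_le_AS (m : ℕ) (hm : 1 ≤ m) (s : Finset (Fin n)) (u : (Fin n → Bool) → ℝ) :
    ∑ ε : Fin n → Bool, (TS ((2*(m:ℝ))⁻¹) s u ε)^(2*m)
      ≤ ∑ ε : Fin n → Bool, (AS s u ε)^(2*m) := by
  have hm' : (1:ℝ) ≤ (m:ℝ) := by exact_mod_cast hm
  have hσ0 : (0:ℝ) ≤ (2*(m:ℝ))⁻¹ := by positivity
  have hσ1 : (2*(m:ℝ))⁻¹ ≤ 1 := by
    rw [inv_le_one_iff₀]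
    right
    linarith
  induction s using Finset.induction_on generalizing u with
  | empty =>
    refine le_of_eq (Finset.sum_congr rfl fun ε _ => ?_)
    rw [TS_empty, AS_empty]
    rw [pow_abs]
    rw [abs_of_nonneg (Even.pow_nonneg (even_two_mul m) (u ε))]
  | @insert j s hj ih =>
    calc ∑ ε : Fin n → Bool, (TS ((2*(m:ℝ))⁻¹) (insert j s) u ε)^(2*m)
        = ∑ ε : Fin n → Bool, (TS ((2*(m:ℝ))⁻¹) s (Mop ((2*(m:ℝ))⁻¹) j u) ε)^(2*m) :=
          Finset.sum_congr rfl fun ε _ => by rw [TS_insert hj]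
      _ ≤ ∑ ε : Fin n → Bool, (AS s (Mop ((2*(m:ℝ))⁻¹) j u) ε)^(2*m) := ih _
      _ ≤ ∑ ε : Fin n → Bool, (Mop ((2*(m:ℝ))⁻¹) j (AS s u) ε)^(2*m) := by
          refine Finset.sum_le_sum fun ε _ => ?_
          exact pow_le_pow_left₀ (AS_nonneg s _ ε) (Mop_AS hσ0 hσ1 hj u ε) (2*m)
      _ ≤ ∑ ε : Fin n → Bool, (Aj j (AS s u) ε)^(2*m) := Mop_pow_sum m hm j (AS s u)
      _ = ∑ ε : Fin n → Bool, (AS (insert j s) u ε)^(2*m) :=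
          Finset.sum_congr rfl fun ε _ => by rw [AS_insert hj]

lemma Tker_scalar_apply (ρ : ℝ) (u : (Fin n → Bool) → ℝ) (ε : Fin n → Bool) :
    Tker ρ u ε = ((2:ℝ)^n)⁻¹ *
      ∑ δ : Fin n → Bool, (∏ j : Fin n, (1 + ρ * (sgn (ε j) * sgn (δ j)))) * u δ := by
  simp only [Tker, smul_eq_mul]

/-- scalar hypercontractivity `L₂ → L_{2m}` for the noise operator with `ρ = 1/(2m)` -/
lemma hyper_scalar (m : ℕ) (hm : 1 ≤ m) (u : (Fin n → Bool) → ℝ) :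
    lpXnorm ((2*m : ℕ) : ℝ) (Tker ((2*(m:ℝ))⁻¹) u) ≤ lpXnorm 2 u := by
  have hq0 : (0:ℝ) < ((2*m : ℕ) : ℝ) := by
    have : (1:ℕ) ≤ 2*m := by omega
    exact_mod_cast Nat.lt_of_lt_of_le Nat.zero_lt_one this
  have hTk : ∀ ε : Fin n → Bool, Tker ((2*(m:ℝ))⁻¹) u ε = TS ((2*(m:ℝ))⁻¹) Finset.univ u ε := by
    intro ε
    rw [Tker_scalar_apply]
    unfold TS
    congr 1
    exact Finset.sum_congr rfl fun δ _ => by rw [merge_univ]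
  have hAS : ∀ ε : Fin n → Bool, (AS Finset.univ u ε)^(2*m)
      = (((2:ℝ)^n)⁻¹ * ∑ δ : Fin n → Bool, (u δ)^2)^m := by
    intro ε
    have h1 : (AS Finset.univ u ε)^(2*m) = ((AS Finset.univ u ε)^2)^m := by rw [← pow_mul]
    have h2 : (AS Finset.univ u ε)^2 = ((2:ℝ)^n)⁻¹ * ∑ δ : Fin n → Bool, (u δ)^2 := by
      unfold AS
      rw [Finset.sum_congr rfl fun δ _ => by rw [merge_univ]]
      rw [Real.sq_sqrt]
      positivity
    rw [h1, h2]
  have key : ∑ ε : Fin n → Bool, (Tker ((2*(m:ℝ))⁻¹) u ε)^(2*m)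
      ≤ 2^n * (((2:ℝ)^n)⁻¹ * ∑ δ : Fin n → Bool, (u δ)^2)^m := by
    calc ∑ ε : Fin n → Bool, (Tker ((2*(m:ℝ))⁻¹) u ε)^(2*m)
        = ∑ ε : Fin n → Bool, (TS ((2*(m:ℝ))⁻¹) Finset.univ u ε)^(2*m) :=
          Finset.sum_congr rfl fun ε _ => by rw [hTk]
      _ ≤ ∑ ε : Fin n → Bool, (AS Finset.univ u ε)^(2*m) := TS_le_AS m hm Finset.univ u
      _ = 2^n * (((2:ℝ)^n)⁻¹ * ∑ δ : Fin n → Bool, (u δ)^2)^m := by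
          rw [Finset.sum_congr rfl fun ε _ => hAS ε, sum_const_cube]
  -- convert to lpXnorm
  apply lpXnorm_le_of_rpow_le hq0 (lpXnorm_nonneg 2 u)
  rw [lpXnorm_rpow hq0]
  have hrpow2 : lpXnorm 2 u ^ ((2*m : ℕ) : ℝ) = ((∑ ε : Fin n → Bool, (u ε)^2) / 2^n)^m := by
    have h1 : lpXnorm 2 u ^ ((2:ℝ)) = (∑ ε : Fin n → Bool, (u ε)^2) / 2^n := by
      rw [lpXnorm_rpow (by norm_num : (0:ℝ) < 2)]
      congr 1
      refine Finset.sum_congr rfl fun ε _ => ?_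
      rw [show ((2:ℝ)) = ((2:ℕ):ℝ) by norm_num, Real.rpow_natCast, Real.norm_eq_abs, sq_abs]
    have h2 : lpXnorm 2 u ^ ((2*m : ℕ) : ℝ) = (lpXnorm 2 u ^ ((2:ℝ)))^m := by
      rw [← Real.rpow_natCast (lpXnorm 2 u ^ (2:ℝ)) m, ← Real.rpow_mul (lpXnorm_nonneg 2 u)]
      congr 1
      push_cast
      ring
    rw [h2, h1]
  rw [hrpow2]
  have hnorm : ∀ ε : Fin n → Bool, ‖Tker ((2*(m:ℝ))⁻¹) u ε‖ ^ ((2*m : ℕ) : ℝ)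
      = (Tker ((2*(m:ℝ))⁻¹) u ε)^(2*m) := by
    intro ε
    rw [Real.rpow_natCast, Real.norm_eq_abs, pow_abs,
      abs_of_nonneg (Even.pow_nonneg (even_two_mul m) _)]
  rw [Finset.sum_congr rfl fun ε _ => hnorm ε]
  rw [div_le_iff₀ (by positivity : (0:ℝ) < (2:ℝ)^n)]
  calc ∑ ε : Fin n → Bool, (Tker ((2*(m:ℝ))⁻¹) u ε)^(2*m)
      ≤ 2^n * (((2:ℝ)^n)⁻¹ * ∑ δ : Fin n → Bool, (u δ)^2)^m := key
    _ = ((∑ ε : Fin n → Bool, (u ε)^2) / 2 ^ n) ^ m * 2 ^ n := by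
        rw [inv_mul_eq_div]
        ring

lemma lpXnorm_norm (p : ℝ) (f : (Fin n → Bool) → X) :
    lpXnorm p (fun ε => ‖f ε‖) = lpXnorm p f := by
  unfold lpXnorm
  congr 1
  congr 1
  exact Finset.sum_congr rfl fun ε _ => by rw [norm_norm]

lemma Tker_norm_le {ρ : ℝ} (hρ0 : 0 ≤ ρ) (hρ1 : ρ ≤ 1) (f : (Fin n → Bool) → X)
    (ε : Fin n → Bool) : ‖Tker ρ f ε‖ ≤ Tker ρ (fun δ => ‖f δ‖) ε := by
  rw [Tker_scalar_apply]
  unfold Tker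
  rw [norm_smul, Real.norm_eq_abs, abs_of_nonneg (by positivity : (0:ℝ) ≤ ((2:ℝ)^n)⁻¹)]
  refine mul_le_mul_of_nonneg_left ?_ (by positivity)
  refine le_trans (norm_sum_le _ _) (Finset.sum_le_sum fun δ _ => ?_)
  rw [norm_smul, Real.norm_eq_abs, abs_of_nonneg (kernel_nonneg hρ0 hρ1 ε δ)]

lemma Tker_scalar_nonneg {ρ : ℝ} (hρ0 : 0 ≤ ρ) (hρ1 : ρ ≤ 1) (u : (Fin n → Bool) → ℝ)
    (hu : ∀ δ, 0 ≤ u δ) (ε : Fin n → Bool) : 0 ≤ Tker ρ u ε := by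
  rw [Tker_scalar_apply]
  refine mul_nonneg (by positivity) (Finset.sum_nonneg fun δ _ => ?_)
  exact mul_nonneg (kernel_nonneg hρ0 hρ1 ε δ) (hu δ)

/-- vector-valued hypercontractivity `L₂(X) → L_{2m}(X)` -/
lemma hyper_vector (m : ℕ) (hm : 1 ≤ m) (f : (Fin n → Bool) → X) :
    lpXnorm ((2*m : ℕ) : ℝ) (Tker ((2*(m:ℝ))⁻¹) f) ≤ lpXnorm 2 f := by
  have hm' : (1:ℝ) ≤ (m:ℝ) := by exact_mod_cast hm
  have hσ0 : (0:ℝ) ≤ (2*(m:ℝ))⁻¹ := by positivity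
  have hσ1 : (2*(m:ℝ))⁻¹ ≤ 1 := by
    rw [inv_le_one_iff₀]
    right
    linarith
  have hq0 : (0:ℝ) < ((2*m : ℕ) : ℝ) := by
    have : (1:ℕ) ≤ 2*m := by omega
    exact_mod_cast Nat.lt_of_lt_of_le Nat.zero_lt_one this
  calc lpXnorm ((2*m : ℕ) : ℝ) (Tker ((2*(m:ℝ))⁻¹) f)
      ≤ lpXnorm ((2*m : ℕ) : ℝ) (Tker ((2*(m:ℝ))⁻¹) (fun δ => ‖f δ‖)) := by
        refine lpXnorm_mono hq0 fun ε => ?_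
        rw [Real.norm_eq_abs, abs_of_nonneg (Tker_scalar_nonneg hσ0 hσ1 _
          (fun δ => norm_nonneg _) ε)]
        exact Tker_norm_le hσ0 hσ1 f ε
    _ ≤ lpXnorm 2 (fun δ => ‖f δ‖) := hyper_scalar m hm _
    _ = lpXnorm 2 f := lpXnorm_norm 2 f

/-! ### Part 7: transference -/

noncomputable def Rad (h : (Fin n → Bool) → X) : (Fin n → Bool) → X :=
  fun ε => ∑ j : Fin n, sgn (ε j) • fourierX h {j}

lemma bmul_right_involutive (δ : Fin n → Bool) : ∀ η, bmul δ (bmul δ η) = η := by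
  intro η
  funext j
  cases hδ : δ j <;> cases hη : η j <;> simp [bmul, hδ, hη]

lemma sum_bmul_right {M : Type*} [AddCommMonoid M] (δ : Fin n → Bool)
    (F : (Fin n → Bool) → M) :
    ∑ η : Fin n → Bool, F (bmul δ η) = ∑ η : Fin n → Bool, F η := by
  have hb : Function.Bijective (fun η => bmul (n := n) δ η) :=
    Function.Involutive.bijective (bmul_right_involutive δ)
  exact Fintype.sum_bijective _ hb _ _ fun η => rfl

lemma flip_bmul (j : Fin n) (δ η : Fin n → Bool) :
    flip j (bmul δ η) = bmul (flip j δ) η := by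
  funext i
  by_cases hij : i = j
  · subst hij
    simp only [flip, Function.update_self, bmul]
    cases hδ : δ i <;> cases hη : η i <;> rfl
  · simp [flip, Function.update, hij, bmul]

lemma dflipX_eq (j : Fin n) (h : (Fin n → Bool) → X) (ε : Fin n → Bool) :
    dflipX j h ε = h ε - h (flip j ε) := rfl

lemma sum_sgn_smul (j : Fin n) (h : (Fin n → Bool) → X) :
    ∑ δ : Fin n → Bool, sgn (δ j) • h δ = ((2:ℝ)^n) • fourierX h {j} := by
  unfold fourierX
  rw [smul_smul, mul_inv_cancel₀ (by positivity : ((2:ℝ)^n) ≠ 0), one_smul]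
  exact Finset.sum_congr rfl fun δ _ => by rw [walsh_singleton]

/-- the key transference identity:
`Σ_δ Σ_j δ_j (∂_j h)(δη) = 2^{n+1} (Rad h)(η)`. -/
lemma transference_identity (h : (Fin n → Bool) → X) (η : Fin n → Bool) :
    ∑ δ : Fin n → Bool, (∑ j : Fin n, sgn (δ j) • dflipX j h (bmul δ η))
      = ((2:ℝ)^n) • ((2:ℝ) • Rad h η) := by
  rw [Finset.sum_comm]
  have hA : ∀ j : Fin n, ∑ δ : Fin n → Bool, sgn (δ j) • h (bmul δ η)
      = (sgn (η j) * (2:ℝ)^n) • fourierX h {j} := by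
    intro j
    have hb := sum_bmul η (fun δ => sgn (δ j) • h (bmul δ η))
    have e1 : ∀ δ : Fin n → Bool, sgn ((bmul δ η) j) • h (bmul (bmul δ η) η)
        = (sgn (η j)) • (sgn (δ j) • h δ) := by
      intro δ
      rw [bmul_bmul, sgn_bmul, smul_smul, mul_comm]
    rw [Finset.sum_congr rfl fun δ _ => e1 δ] at hb
    rw [← hb, ← Finset.smul_sum, sum_sgn_smul j h, smul_smul]
  have hB : ∀ j : Fin n, ∑ δ : Fin n → Bool, sgn (δ j) • h (flip j (bmul δ η))
      = -((sgn (η j) * (2:ℝ)^n) • fourierX h {j}) := by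
    intro j
    have e0 : ∀ δ : Fin n → Bool, sgn (δ j) • h (flip j (bmul δ η))
        = sgn (δ j) • h (bmul (flip j δ) η) := by
      intro δ
      rw [flip_bmul]
    rw [Finset.sum_congr rfl fun δ _ => e0 δ]
    have hf := sum_flip j (fun δ => sgn (δ j) • h (bmul (flip j δ) η))
    have e1 : ∀ ε : Fin n → Bool, sgn ((flip j ε) j) • h (bmul (flip j (flip j ε)) η)
        = -(sgn (ε j) • h (bmul ε η)) := by
      intro ε
      rw [flip_flip, sgn_flip_self, neg_smul]
    rw [Finset.sum_congr rfl fun ε _ => e1 ε, Finset.sum_neg_distrib] at hf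
    -- hf : -∑ sgn(εj)•h(bmul ε η) = ∑ sgn(εj)•h(bmul (flip j ε) η)
    rw [← hf, hA j]
  have hAB : ∀ j : Fin n, ∑ δ : Fin n → Bool, sgn (δ j) • dflipX j h (bmul δ η)
      = ((2:ℝ)^n) • ((2:ℝ) • ((sgn (η j)) • fourierX h {j})) := by
    intro j
    have e1 : ∀ δ : Fin n → Bool, sgn (δ j) • dflipX j h (bmul δ η)
        = sgn (δ j) • h (bmul δ η) - sgn (δ j) • h (flip j (bmul δ η)) := by
      intro δ
      rw [dflipX_eq, smul_sub]
    rw [Finset.sum_congr rfl fun δ _ => e1 δ, Finset.sum_sub_distrib, hA j, hB j,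
      sub_neg_eq_add, ← add_smul, smul_smul, smul_smul]
    congr 1
    ring
  rw [Finset.sum_congr rfl fun j _ => hAB j]
  unfold Rad
  rw [Finset.smul_sum, Finset.smul_sum]

/-- transference inequality -/
lemma transference {p : ℝ} (hp : 1 ≤ p) (h : (Fin n → Bool) → X) :
    lpXnorm p (fun η => (2:ℝ) • Rad h η) ^ p ≤
      (∑ δ : Fin n → Bool, lpXnorm p
          (fun ε => ∑ j : Fin n, sgn (δ j) • dflipX j h ε) ^ p) / 2 ^ n := by
  have hp0 : 0 < p := lt_of_lt_of_le one_pos hp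
  -- pointwise bound
  have hpt : ∀ η : Fin n → Bool, ‖(2:ℝ) • Rad h η‖ ^ p
      ≤ ((2:ℝ)^n)⁻¹ * ∑ δ : Fin n → Bool,
          ‖∑ j : Fin n, sgn (δ j) • dflipX j h (bmul δ η)‖ ^ p := by
    intro η
    have hid : (2:ℝ) • Rad h η = ((2:ℝ)^n)⁻¹ •
        ∑ δ : Fin n → Bool, (∑ j : Fin n, sgn (δ j) • dflipX j h (bmul δ η)) := by
      rw [transference_identity, smul_smul,
        inv_mul_cancel₀ (by positivity : ((2:ℝ)^n) ≠ 0), one_smul]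
    have h1 : ‖(2:ℝ) • Rad h η‖ ≤ ∑ δ : Fin n → Bool,
        ((2:ℝ)^n)⁻¹ * ‖∑ j : Fin n, sgn (δ j) • dflipX j h (bmul δ η)‖ := by
      rw [hid, norm_smul, Real.norm_eq_abs,
        abs_of_nonneg (by positivity : (0:ℝ) ≤ ((2:ℝ)^n)⁻¹)]
      calc ((2:ℝ)^n)⁻¹ * ‖∑ δ : Fin n → Bool, ∑ j : Fin n, sgn (δ j) • dflipX j h (bmul δ η)‖
          ≤ ((2:ℝ)^n)⁻¹ * ∑ δ : Fin n → Bool,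
              ‖∑ j : Fin n, sgn (δ j) • dflipX j h (bmul δ η)‖ :=
            mul_le_mul_of_nonneg_left (norm_sum_le _ _) (by positivity)
        _ = ∑ δ : Fin n → Bool, ((2:ℝ)^n)⁻¹ *
              ‖∑ j : Fin n, sgn (δ j) • dflipX j h (bmul δ η)‖ := Finset.mul_sum _ _ _
    have hw1 : ∑ _δ : Fin n → Bool, ((2:ℝ)^n)⁻¹ = 1 := by
      rw [sum_const_cube]
      field_simp
    have hjen := Real.rpow_arith_mean_le_arith_mean_rpow Finset.univ
      (fun _δ => ((2:ℝ)^n)⁻¹)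
      (fun δ => ‖∑ j : Fin n, sgn (δ j) • dflipX j h (bmul δ η)‖)
      (fun δ _ => by positivity) hw1 (fun δ _ => norm_nonneg _) hp
    calc ‖(2:ℝ) • Rad h η‖ ^ p
        ≤ (∑ δ : Fin n → Bool, ((2:ℝ)^n)⁻¹ *
            ‖∑ j : Fin n, sgn (δ j) • dflipX j h (bmul δ η)‖) ^ p :=
          Real.rpow_le_rpow (norm_nonneg _) h1 (le_of_lt hp0)
      _ ≤ ∑ δ : Fin n → Bool, ((2:ℝ)^n)⁻¹ *
            ‖∑ j : Fin n, sgn (δ j) • dflipX j h (bmul δ η)‖ ^ p := hjen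
      _ = ((2:ℝ)^n)⁻¹ * ∑ δ : Fin n → Bool,
            ‖∑ j : Fin n, sgn (δ j) • dflipX j h (bmul δ η)‖ ^ p := by
          rw [Finset.mul_sum]
  -- sum over η
  rw [lpXnorm_rpow hp0]
  have hsum : ∑ η : Fin n → Bool, ‖(2:ℝ) • Rad h η‖ ^ p
      ≤ ∑ δ : Fin n → Bool, ((2:ℝ)^n)⁻¹ * ∑ ε : Fin n → Bool,
          ‖∑ j : Fin n, sgn (δ j) • dflipX j h ε‖ ^ p := by
    calc ∑ η : Fin n → Bool, ‖(2:ℝ) • Rad h η‖ ^ p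
        ≤ ∑ η : Fin n → Bool, ((2:ℝ)^n)⁻¹ * ∑ δ : Fin n → Bool,
            ‖∑ j : Fin n, sgn (δ j) • dflipX j h (bmul δ η)‖ ^ p :=
          Finset.sum_le_sum fun η _ => hpt η
      _ = ∑ δ : Fin n → Bool, ((2:ℝ)^n)⁻¹ * ∑ η : Fin n → Bool,
            ‖∑ j : Fin n, sgn (δ j) • dflipX j h (bmul δ η)‖ ^ p := by
          rw [← Finset.mul_sum, ← Finset.mul_sum, Finset.sum_comm]
      _ = ∑ δ : Fin n → Bool, ((2:ℝ)^n)⁻¹ * ∑ ε : Fin n → Bool,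
            ‖∑ j : Fin n, sgn (δ j) • dflipX j h ε‖ ^ p := by
          refine Finset.sum_congr rfl fun δ _ => ?_
          congr 1
          exact sum_bmul_right δ (fun ε => ‖∑ j : Fin n, sgn (δ j) • dflipX j h ε‖ ^ p)
  have hconv : ∀ δ : Fin n → Bool, ((2:ℝ)^n)⁻¹ * ∑ ε : Fin n → Bool,
      ‖∑ j : Fin n, sgn (δ j) • dflipX j h ε‖ ^ p
        = lpXnorm p (fun ε => ∑ j : Fin n, sgn (δ j) • dflipX j h ε) ^ p := by
    intro δ
    rw [lpXnorm_rpow hp0]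
    rw [inv_mul_eq_div]
  calc (∑ η : Fin n → Bool, ‖(2:ℝ) • Rad h η‖ ^ p) / 2^n
      ≤ (∑ δ : Fin n → Bool, ((2:ℝ)^n)⁻¹ * ∑ ε : Fin n → Bool,
          ‖∑ j : Fin n, sgn (δ j) • dflipX j h ε‖ ^ p) / 2^n :=
        div_le_div_of_nonneg_right hsum (by positivity)
    _ = (∑ δ : Fin n → Bool, lpXnorm p
          (fun ε => ∑ j : Fin n, sgn (δ j) • dflipX j h ε) ^ p) / 2 ^ n := by
        rw [Finset.sum_congr rfl fun δ _ => hconv δ]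

/-! ### Part 8: the auxiliary function and multiplier computations -/

lemma fourierX_of_sum' {ι : Type*} [Fintype ι] (c : ι → ℝ) (A : ι → Finset (Fin n))
    (v : ι → X) (B : Finset (Fin n)) :
    fourierX (fun ε => ∑ i : ι, (c i * walsh (A i) ε) • v i) B
      = ∑ i : ι, (if A i = B then c i else 0) • v i := by
  unfold fourierX
  have e1 : ∀ ε : Fin n → Bool,
      walsh B ε • ∑ i : ι, (c i * walsh (A i) ε) • v i
        = ∑ i : ι, (c i * (walsh (A i) ε * walsh B ε)) • v i := by
    intro ε
    rw [Finset.smul_sum]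
    refine Finset.sum_congr rfl fun i _ => ?_
    rw [smul_smul]
    congr 1
    ring
  rw [Finset.sum_congr rfl fun ε _ => e1 ε, Finset.sum_comm]
  have e2 : ∀ i : ι,
      ∑ ε : Fin n → Bool, (c i * (walsh (A i) ε * walsh B ε)) • v i
        = (c i * if A i = B then (2:ℝ)^n else 0) • v i := by
    intro i
    rw [← Finset.sum_smul, ← Finset.mul_sum, sum_walsh_mul_walsh]
  rw [Finset.sum_congr rfl fun i _ => e2 i, Finset.smul_sum]
  refine Finset.sum_congr rfl fun i _ => ?_
  rw [smul_smul]
  by_cases h : A i = B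
  · simp only [h, if_true]
    congr 1
    rw [mul_comm (c i) _, ← mul_assoc, inv_mul_cancel₀ (by positivity : ((2:ℝ)^n) ≠ 0), one_mul]
  · simp [h]

noncomputable def gaux (α ρ : ℝ) (f : (Fin n → Bool) → X) : (Fin n → Bool) → X :=
  fun ε => ∑ A : Finset (Fin n),
    ((if A.Nonempty then ρ ^ A.card * ((A.card : ℝ) ^ (-α)) else 0) * walsh A ε) • fourierX f A

lemma fourierX_gaux (α ρ : ℝ) (f : (Fin n → Bool) → X) (B : Finset (Fin n)) :
    fourierX (gaux α ρ f) B
      = (if B.Nonempty then ρ ^ B.card * ((B.card : ℝ) ^ (-α)) else 0) • fourierX f B :=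
  fourierX_of_sum (fun A => if A.Nonempty then ρ ^ A.card * ((A.card : ℝ) ^ (-α)) else 0)
    (fun A => fourierX f A) B

lemma deltaPowX_gaux (α ρ : ℝ) (f : (Fin n → Bool) → X) (ε : Fin n → Bool) :
    deltaPowX α (gaux α ρ f) ε = Tker ρ f ε - fourierX f ∅ := by
  unfold deltaPowX
  have e1 : ∀ A : Finset (Fin n),
      (if A.Nonempty then (((A.card : ℝ) ^ α) * walsh A ε) • fourierX (gaux α ρ f) A else 0)
        = (if A.Nonempty then (ρ ^ A.card * walsh A ε) • fourierX f A else 0) := by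
    intro A
    by_cases hA : A.Nonempty
    · simp only [hA, if_true]
      rw [fourierX_gaux]
      simp only [hA, if_true]
      rw [smul_smul]
      congr 1
      have hc : (0:ℝ) < (A.card : ℝ) := by exact_mod_cast Finset.card_pos.mpr hA
      have : ((A.card:ℝ)^α) * walsh A ε * (ρ ^ A.card * ((A.card : ℝ) ^ (-α)))
          = (((A.card:ℝ)^α) * ((A.card : ℝ) ^ (-α))) * (ρ ^ A.card * walsh A ε) := by ring
      rw [this, ← Real.rpow_add hc]
      norm_num
    · simp [hA]
  rw [Finset.sum_congr rfl fun A _ => e1 A]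
  have e2 : ∀ A : Finset (Fin n), (ρ ^ A.card * walsh A ε) • fourierX f A
      = (if A.Nonempty then (ρ ^ A.card * walsh A ε) • fourierX f A else 0)
        + (if A = ∅ then fourierX f ∅ else 0) := by
    intro A
    by_cases hA : A.Nonempty
    · have hne : ¬ (A = ∅) := Finset.nonempty_iff_ne_empty.mp hA
      simp [hA, hne]
    · have hAe : A = ∅ := Finset.not_nonempty_iff_eq_empty.mp hA
      subst hAe
      simp [walsh_empty]
  have e3 : Tker ρ f ε = (∑ A : Finset (Fin n),
      if A.Nonempty then (ρ ^ A.card * walsh A ε) • fourierX f A else 0) + fourierX f ∅ := by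
    rw [show Tker ρ f ε = ∑ A : Finset (Fin n), (ρ ^ A.card * walsh A ε) • fourierX f A
        from Tker_eq_mult ρ f ε]
    rw [Finset.sum_congr rfl fun A _ => e2 A, Finset.sum_add_distrib,
      Finset.sum_ite_eq' Finset.univ ∅ (fun _ => fourierX f ∅)]
    simp
  rw [e3, add_sub_cancel_right]

lemma Rad_gaux (α ρ : ℝ) (f : (Fin n → Bool) → X) (η : Fin n → Bool) :
    Rad (gaux α ρ f) η = ρ • Rad f η := by
  unfold Rad
  rw [Finset.smul_sum]
  refine Finset.sum_congr rfl fun j _ => ?_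
  rw [fourierX_gaux]
  have hne : ({j} : Finset (Fin n)).Nonempty := ⟨j, by simp⟩
  simp only [hne, if_true, Finset.card_singleton]
  rw [Nat.cast_one, Real.one_rpow, pow_one, mul_one, smul_smul, smul_smul, mul_comm]

lemma fourierX_Rad (f : (Fin n → Bool) → X) (B : Finset (Fin n)) :
    fourierX (Rad f) B
      = ∑ j : Fin n, (if ({j} : Finset (Fin n)) = B then (1:ℝ) else 0) • fourierX f {j} := by
  have e : Rad f = fun ε => ∑ j : Fin n,
      ((1:ℝ) * walsh ({j} : Finset (Fin n)) ε) • fourierX f {j} := by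
    funext ε
    unfold Rad
    exact Finset.sum_congr rfl fun j _ => by rw [walsh_singleton, one_mul]
  rw [e, fourierX_of_sum' (fun _ => (1:ℝ)) (fun j => ({j} : Finset (Fin n)))
    (fun j => fourierX f {j}) B]

lemma Tker_Rad (σ : ℝ) (f : (Fin n → Bool) → X) (ε : Fin n → Bool) :
    Tker σ (Rad f) ε = σ • Rad f ε := by
  rw [Tker_eq_mult]
  have e1 : ∀ B : Finset (Fin n), (σ ^ B.card * walsh B ε) • fourierX (Rad f) B
      = ∑ j : Fin n, (if ({j} : Finset (Fin n)) = B then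
          (σ ^ B.card * walsh B ε) • fourierX f {j} else 0) := by
    intro B
    rw [fourierX_Rad, Finset.smul_sum]
    refine Finset.sum_congr rfl fun j _ => ?_
    by_cases h : ({j} : Finset (Fin n)) = B
    · simp [h]
    · simp [h]
  rw [Finset.sum_congr rfl fun B _ => e1 B, Finset.sum_comm]
  have e2 : ∀ j : Fin n, (∑ B : Finset (Fin n), if ({j} : Finset (Fin n)) = B then
      (σ ^ B.card * walsh B ε) • fourierX f {j} else 0)
        = (σ * sgn (ε j)) • fourierX f {j} := by
    intro j
    rw [Finset.sum_ite_eq Finset.univ ({j} : Finset (Fin n))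
      (fun B => (σ ^ B.card * walsh B ε) • fourierX f {j})]
    simp only [Finset.mem_univ, if_true, Finset.card_singleton, pow_one, walsh_singleton]
  rw [Finset.sum_congr rfl fun j _ => e2 j]
  unfold Rad
  rw [Finset.smul_sum]
  refine Finset.sum_congr rfl fun j _ => ?_
  rw [smul_smul]

lemma lpXnorm_one (f : (Fin n → Bool) → X) :
    lpXnorm 1 f = (∑ ε : Fin n → Bool, ‖f ε‖) / 2 ^ n := by
  have h := lpXnorm_rpow (by norm_num : (0:ℝ) < 1) f
  rw [Real.rpow_one] at h
  rw [h]
  congr 1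
  exact Finset.sum_congr rfl fun ε _ => Real.rpow_one _

lemma norm_fourierX_empty_le (f : (Fin n → Bool) → X) :
    ‖fourierX f ∅‖ ≤ lpXnorm 1 f := by
  unfold fourierX
  rw [lpXnorm_one, norm_smul, Real.norm_eq_abs,
    abs_of_nonneg (by positivity : (0:ℝ) ≤ ((2:ℝ)^n)⁻¹), inv_mul_eq_div]
  apply div_le_div_of_nonneg_right ?_ (by positivity)
  refine le_trans (norm_sum_le _ _) (Finset.sum_le_sum fun ε _ => ?_)
  rw [walsh_empty, one_smul]

/-! ### Part 9: Kahane-type inequality from hypercontractivity -/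

lemma lpXnorm_pow_nat (k : ℕ) (hk : 0 < k) (f : (Fin n → Bool) → X) :
    lpXnorm ((k:ℕ):ℝ) f ^ k = (∑ ε : Fin n → Bool, ‖f ε‖ ^ k) / 2 ^ n := by
  have h := lpXnorm_rpow (show (0:ℝ) < ((k:ℕ):ℝ) by exact_mod_cast hk) f
  calc lpXnorm ((k:ℕ):ℝ) f ^ k
      = lpXnorm ((k:ℕ):ℝ) f ^ (((k:ℕ)):ℝ) := (Real.rpow_natCast _ k).symm
    _ = (∑ ε : Fin n → Bool, ‖f ε‖ ^ (((k:ℕ)):ℝ)) / 2 ^ n := h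
    _ = (∑ ε : Fin n → Bool, ‖f ε‖ ^ k) / 2 ^ n := by
        congr 1
        exact Finset.sum_congr rfl fun ε _ => Real.rpow_natCast _ k

lemma kahane (f : (Fin n → Bool) → X) : lpXnorm 2 (Rad f) ≤ 16 * lpXnorm 1 (Rad f) := by
  set g : (Fin n → Bool) → X := Rad f with hg
  have ha0 : 0 ≤ lpXnorm 1 g := lpXnorm_nonneg 1 g
  have hb0 : 0 ≤ lpXnorm 2 g := lpXnorm_nonneg 2 g
  have hc0 : 0 ≤ lpXnorm 4 g := lpXnorm_nonneg 4 g
  -- hypercontractive bound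
  have hhyper : lpXnorm 4 g ≤ 4 * lpXnorm 2 g := by
    have hT : ∀ ε, g ε = (4:ℝ) • Tker ((4:ℝ)⁻¹) g ε := by
      intro ε
      rw [hg, Tker_Rad, smul_smul]
      norm_num
    have h2 : lpXnorm 4 (Tker ((4:ℝ)⁻¹) g) ≤ lpXnorm 2 g := by
      have h := hyper_vector (n := n) 2 (by norm_num) g
      have e1 : ((2*2 : ℕ) : ℝ) = (4:ℝ) := by norm_num
      have e2 : ((2:ℝ)*((2:ℕ):ℝ))⁻¹ = (4:ℝ)⁻¹ := by norm_num
      rw [e1, e2] at h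
      exact h
    calc lpXnorm 4 g = lpXnorm 4 (fun ε => (4:ℝ) • Tker ((4:ℝ)⁻¹) g ε) := lpXnorm_congr hT
      _ = |(4:ℝ)| * lpXnorm 4 (Tker ((4:ℝ)⁻¹) g) := lpXnorm_smul (by norm_num) 4 _
      _ ≤ 4 * lpXnorm 2 g := by
          rw [show |(4:ℝ)| = 4 by norm_num]
          exact mul_le_mul_of_nonneg_left h2 (by norm_num)
  -- raw moment sums
  have hA : lpXnorm 1 g = (∑ ε : Fin n → Bool, ‖g ε‖) / 2 ^ n := lpXnorm_one g
  have hB : lpXnorm 2 g ^ 2 = (∑ ε : Fin n → Bool, ‖g ε‖ ^ 2) / 2 ^ n := by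
    have h := lpXnorm_pow_nat 2 (by norm_num) g
    rw [show (((2:ℕ)):ℝ) = (2:ℝ) by norm_num] at h
    exact h
  have hC : lpXnorm 4 g ^ 4 = (∑ ε : Fin n → Bool, ‖g ε‖ ^ 4) / 2 ^ n := by
    have h := lpXnorm_pow_nat 4 (by norm_num) g
    rw [show (((4:ℕ)):ℝ) = (4:ℝ) by norm_num] at h
    exact h
  have hR1 : (0:ℝ) ≤ ∑ ε : Fin n → Bool, ‖g ε‖ :=
    Finset.sum_nonneg fun ε _ => norm_nonneg _
  have hR2 : (0:ℝ) ≤ ∑ ε : Fin n → Bool, ‖g ε‖ ^ 2 :=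
    Finset.sum_nonneg fun ε _ => by positivity
  have hR4 : (0:ℝ) ≤ ∑ ε : Fin n → Bool, ‖g ε‖ ^ 4 :=
    Finset.sum_nonneg fun ε _ => by positivity
  -- Cauchy-Schwarz twice
  have CS1 : (∑ ε : Fin n → Bool, ‖g ε‖ ^ 2) ^ 2
      ≤ (∑ ε : Fin n → Bool, ‖g ε‖) * (∑ ε : Fin n → Bool, ‖g ε‖ ^ 3) := by
    have h := Finset.sum_mul_sq_le_sq_mul_sq Finset.univ (fun ε => Real.sqrt ‖g ε‖)
      (fun ε => ‖g ε‖ * Real.sqrt ‖g ε‖)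
    have e1 : ∀ ε : Fin n → Bool,
        Real.sqrt ‖g ε‖ * (‖g ε‖ * Real.sqrt ‖g ε‖) = ‖g ε‖ ^ 2 := by
      intro ε
      have : Real.sqrt ‖g ε‖ * (‖g ε‖ * Real.sqrt ‖g ε‖)
          = (Real.sqrt ‖g ε‖ * Real.sqrt ‖g ε‖) * ‖g ε‖ := by ring
      rw [this, Real.mul_self_sqrt (norm_nonneg _)]
      ring
    have e2 : ∀ ε : Fin n → Bool, (Real.sqrt ‖g ε‖) ^ 2 = ‖g ε‖ :=
      fun ε => Real.sq_sqrt (norm_nonneg _)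
    have e3 : ∀ ε : Fin n → Bool, (‖g ε‖ * Real.sqrt ‖g ε‖) ^ 2 = ‖g ε‖ ^ 3 := by
      intro ε
      rw [mul_pow, Real.sq_sqrt (norm_nonneg _)]
      ring
    rw [Finset.sum_congr rfl fun ε _ => e1 ε, Finset.sum_congr rfl fun ε _ => e2 ε,
      Finset.sum_congr rfl fun ε _ => e3 ε] at h
    exact h
  have CS2 : (∑ ε : Fin n → Bool, ‖g ε‖ ^ 3) ^ 2
      ≤ (∑ ε : Fin n → Bool, ‖g ε‖ ^ 2) * (∑ ε : Fin n → Bool, ‖g ε‖ ^ 4) := by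
    have h := Finset.sum_mul_sq_le_sq_mul_sq Finset.univ (fun ε => ‖g ε‖)
      (fun ε => ‖g ε‖ ^ 2)
    have e1 : ∀ ε : Fin n → Bool, ‖g ε‖ * ‖g ε‖ ^ 2 = ‖g ε‖ ^ 3 := fun ε => by ring
    have e3 : ∀ ε : Fin n → Bool, (‖g ε‖ ^ 2) ^ 2 = ‖g ε‖ ^ 4 := fun ε => by ring
    rw [Finset.sum_congr rfl fun ε _ => e1 ε, Finset.sum_congr rfl fun ε _ => e3 ε] at h
    exact h
  -- combine: R2^3 ≤ R1^2 * R4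
  have key : (∑ ε : Fin n → Bool, ‖g ε‖ ^ 2) ^ 3
      ≤ (∑ ε : Fin n → Bool, ‖g ε‖) ^ 2 * (∑ ε : Fin n → Bool, ‖g ε‖ ^ 4) := by
    rcases eq_or_lt_of_le hR2 with h0 | hpos
    · rw [← h0]
      norm_num
      positivity
    · have h1 : ((∑ ε : Fin n → Bool, ‖g ε‖ ^ 2) ^ 2) ^ 2
          ≤ ((∑ ε : Fin n → Bool, ‖g ε‖) * (∑ ε : Fin n → Bool, ‖g ε‖ ^ 3)) ^ 2 :=
        pow_le_pow_left₀ (by positivity) CS1 2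
      have h2 : ((∑ ε : Fin n → Bool, ‖g ε‖) * (∑ ε : Fin n → Bool, ‖g ε‖ ^ 3)) ^ 2
          = (∑ ε : Fin n → Bool, ‖g ε‖) ^ 2 * (∑ ε : Fin n → Bool, ‖g ε‖ ^ 3) ^ 2 := by ring
      have h3 : (∑ ε : Fin n → Bool, ‖g ε‖) ^ 2 * (∑ ε : Fin n → Bool, ‖g ε‖ ^ 3) ^ 2
          ≤ (∑ ε : Fin n → Bool, ‖g ε‖) ^ 2 *
            ((∑ ε : Fin n → Bool, ‖g ε‖ ^ 2) * (∑ ε : Fin n → Bool, ‖g ε‖ ^ 4)) :=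
        mul_le_mul_of_nonneg_left CS2 (by positivity)
      have h4 : ((∑ ε : Fin n → Bool, ‖g ε‖ ^ 2) ^ 2) ^ 2
          = ((∑ ε : Fin n → Bool, ‖g ε‖ ^ 2) ^ 3) * (∑ ε : Fin n → Bool, ‖g ε‖ ^ 2) := by ring
      have h5 : (∑ ε : Fin n → Bool, ‖g ε‖) ^ 2 *
            ((∑ ε : Fin n → Bool, ‖g ε‖ ^ 2) * (∑ ε : Fin n → Bool, ‖g ε‖ ^ 4))
          = ((∑ ε : Fin n → Bool, ‖g ε‖) ^ 2 * (∑ ε : Fin n → Bool, ‖g ε‖ ^ 4))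
              * (∑ ε : Fin n → Bool, ‖g ε‖ ^ 2) := by ring
      have h6 : ((∑ ε : Fin n → Bool, ‖g ε‖ ^ 2) ^ 3) * (∑ ε : Fin n → Bool, ‖g ε‖ ^ 2)
          ≤ ((∑ ε : Fin n → Bool, ‖g ε‖) ^ 2 * (∑ ε : Fin n → Bool, ‖g ε‖ ^ 4))
              * (∑ ε : Fin n → Bool, ‖g ε‖ ^ 2) := by
        calc _ = ((∑ ε : Fin n → Bool, ‖g ε‖ ^ 2) ^ 2) ^ 2 := h4.symm
          _ ≤ _ := le_trans h1 (le_of_eq_of_le h2 (le_of_le_of_eq h3 h5))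
      exact le_of_mul_le_mul_right h6 hpos
  -- conclude b^6 ≤ 256 a^2 b^4
  have hN : (0:ℝ) < (2:ℝ)^n := by positivity
  have hb6 : lpXnorm 2 g ^ 6 ≤ 256 * lpXnorm 1 g ^ 2 * lpXnorm 2 g ^ 4 := by
    have e1 : lpXnorm 2 g ^ 6 = (lpXnorm 2 g ^ 2) ^ 3 := by ring
    have e2 : (lpXnorm 2 g ^ 2) ^ 3
        = ((∑ ε : Fin n → Bool, ‖g ε‖ ^ 2) ^ 3) / ((2:ℝ)^n) ^ 3 := by
      rw [hB, div_pow]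
    have e3 : ((∑ ε : Fin n → Bool, ‖g ε‖ ^ 2) ^ 3) / ((2:ℝ)^n) ^ 3
        ≤ ((∑ ε : Fin n → Bool, ‖g ε‖) ^ 2 * (∑ ε : Fin n → Bool, ‖g ε‖ ^ 4)) / ((2:ℝ)^n)^3 :=
      div_le_div_of_nonneg_right key (by positivity)
    have e4 : ((∑ ε : Fin n → Bool, ‖g ε‖) ^ 2 * (∑ ε : Fin n → Bool, ‖g ε‖ ^ 4)) / ((2:ℝ)^n)^3
        = (lpXnorm 1 g) ^ 2 * (lpXnorm 4 g ^ 4) := by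
      rw [hA, hC]
      ring
    have e5 : (lpXnorm 1 g) ^ 2 * (lpXnorm 4 g ^ 4)
        ≤ (lpXnorm 1 g) ^ 2 * ((4 * lpXnorm 2 g) ^ 4) :=
      mul_le_mul_of_nonneg_left (pow_le_pow_left₀ hc0 hhyper 4) (by positivity)
    calc lpXnorm 2 g ^ 6 = ((∑ ε : Fin n → Bool, ‖g ε‖ ^ 2) ^ 3) / ((2:ℝ)^n) ^ 3 := by
          rw [e1, e2]
      _ ≤ (lpXnorm 1 g) ^ 2 * ((4 * lpXnorm 2 g) ^ 4) := le_of_le_of_eq e3 e4 |>.trans e5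
      _ = 256 * lpXnorm 1 g ^ 2 * lpXnorm 2 g ^ 4 := by ring
  -- final
  rcases eq_or_lt_of_le hb0 with h0 | hbpos
  · rw [← h0]
    exact mul_nonneg (by norm_num) ha0
  · have hb4 : (0:ℝ) < lpXnorm 2 g ^ 4 := pow_pos hbpos 4
    have h7 : lpXnorm 2 g ^ 2 * lpXnorm 2 g ^ 4 ≤ (256 * lpXnorm 1 g ^ 2) * lpXnorm 2 g ^ 4 := by
      calc lpXnorm 2 g ^ 2 * lpXnorm 2 g ^ 4 = lpXnorm 2 g ^ 6 := by ring
        _ ≤ 256 * lpXnorm 1 g ^ 2 * lpXnorm 2 g ^ 4 := hb6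
        _ = (256 * lpXnorm 1 g ^ 2) * lpXnorm 2 g ^ 4 := by ring
    have h7 : lpXnorm 2 g ^ 2 ≤ 256 * lpXnorm 1 g ^ 2 := le_of_mul_le_mul_right h7 hb4
    have h8 : lpXnorm 2 g ^ 2 ≤ (16 * lpXnorm 1 g) ^ 2 := by
      calc lpXnorm 2 g ^ 2 ≤ 256 * lpXnorm 1 g ^ 2 := h7
        _ = (16 * lpXnorm 1 g) ^ 2 := by ring
    exact le_of_pow_le_pow_left₀ (by norm_num) (mul_nonneg (by norm_num) ha0) h8

/-! ### Part 10: the master bound -/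

lemma master {p : ℝ} (hp : 1 ≤ p) {α ρ K : ℝ} (hK : 0 ≤ K)
    (f : (Fin n → Bool) → X)
    (hR : (∑ δ : Fin n → Bool, lpXnorm p
          (fun ε => ∑ j : Fin n, sgn (δ j) • dflipX j (gaux α ρ f) ε) ^ p) / 2 ^ n
        ≤ K ^ p * lpXnorm p (deltaPowX α (gaux α ρ f)) ^ p) :
    lpXnorm p (fun η => ((2:ℝ)*ρ) • Rad f η)
      ≤ K * (lpXnorm p (Tker ρ f) + lpXnorm 1 f) := by
  have hp0 : (0:ℝ) < p := lt_of_lt_of_le one_pos hp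
  have h1 : lpXnorm p (fun η => ((2:ℝ)*ρ) • Rad f η)
      = lpXnorm p (fun η => (2:ℝ) • Rad (gaux α ρ f) η) := by
    refine (lpXnorm_congr fun η => ?_).symm
    rw [Rad_gaux, smul_smul]
  have h2 := transference hp (gaux α ρ f)
  have h3 : lpXnorm p (fun η => (2:ℝ) • Rad (gaux α ρ f) η) ^ p
      ≤ K ^ p * lpXnorm p (deltaPowX α (gaux α ρ f)) ^ p := le_trans h2 hR
  have h4 : lpXnorm p (deltaPowX α (gaux α ρ f))
      ≤ lpXnorm p (Tker ρ f) + lpXnorm 1 f := by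
    have e1 : lpXnorm p (deltaPowX α (gaux α ρ f))
        = lpXnorm p (fun ε => Tker ρ f ε + (fun _ : Fin n → Bool => -fourierX f ∅) ε) := by
      refine lpXnorm_congr fun ε => ?_
      rw [deltaPowX_gaux, sub_eq_add_neg]
    rw [e1]
    refine le_trans (lpXnorm_add_le hp _ _) ?_
    have e2 : lpXnorm p (fun _ : Fin n → Bool => -fourierX f ∅) = ‖fourierX f ∅‖ := by
      rw [lpXnorm_const hp0, norm_neg]
    rw [e2]
    exact add_le_add (le_refl _) (norm_fourierX_empty_le f)
  have h5 : K ^ p * lpXnorm p (deltaPowX α (gaux α ρ f)) ^ p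
      ≤ (K * (lpXnorm p (Tker ρ f) + lpXnorm 1 f)) ^ p := by
    rw [Real.mul_rpow hK (by
      have := lpXnorm_nonneg p (Tker ρ f)
      have := lpXnorm_nonneg 1 f
      linarith)]
    refine mul_le_mul_of_nonneg_left ?_ (Real.rpow_nonneg hK p)
    exact Real.rpow_le_rpow (lpXnorm_nonneg _ _) h4 (le_of_lt hp0)
  rw [h1]
  refine lpXnorm_le_of_rpow_le hp0 ?_ (le_trans h3 h5)
  have := lpXnorm_nonneg p (Tker ρ f)
  have := lpXnorm_nonneg 1 f
  positivity

/-- branch `p ≤ 2` -/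
lemma branchA {p : ℝ} (hp : 1 ≤ p) (hp2 : p ≤ 2) {α K : ℝ} (hK : 0 ≤ K)
    (f : (Fin n → Bool) → X)
    (hR : (∑ δ : Fin n → Bool, lpXnorm p
          (fun ε => ∑ j : Fin n, sgn (δ j) • dflipX j (gaux α (2⁻¹) f) ε) ^ p) / 2 ^ n
        ≤ K ^ p * lpXnorm p (deltaPowX α (gaux α (2⁻¹) f)) ^ p) :
    lpXnorm 2 (Rad f) ≤ 32 * K * lpXnorm 2 f := by
  have hp0 : (0:ℝ) < p := lt_of_lt_of_le one_pos hp
  have hm := master hp hK f hR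
  have e1 : lpXnorm p (fun η => ((2:ℝ)*2⁻¹) • Rad f η) = lpXnorm p (Rad f) := by
    refine lpXnorm_congr fun η => ?_
    norm_num
  rw [e1] at hm
  have h2 : lpXnorm p (Tker (2⁻¹ : ℝ) f) ≤ lpXnorm 2 f := by
    refine le_trans (Tker_contract hp (by norm_num) (by norm_num) f) ?_
    exact lpXnorm_le_lpXnorm hp0 hp2 f
  have h3 : lpXnorm 1 f ≤ lpXnorm 2 f :=
    lpXnorm_le_lpXnorm (by norm_num) (by norm_num) f
  have h4 : lpXnorm p (Rad f) ≤ K * (2 * lpXnorm 2 f) := by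
    refine le_trans hm (mul_le_mul_of_nonneg_left ?_ hK)
    linarith
  calc lpXnorm 2 (Rad f) ≤ 16 * lpXnorm 1 (Rad f) := kahane f
    _ ≤ 16 * lpXnorm p (Rad f) := by
        refine mul_le_mul_of_nonneg_left ?_ (by norm_num)
        exact lpXnorm_le_lpXnorm (by norm_num) hp (Rad f)
    _ ≤ 16 * (K * (2 * lpXnorm 2 f)) := mul_le_mul_of_nonneg_left h4 (by norm_num)
    _ = 32 * K * lpXnorm 2 f := by ring

/-- branch `2 ≤ p` -/
lemma branchB {p : ℝ} (hp : 1 ≤ p) (hp2 : 2 ≤ p) {α K : ℝ} (hK : 0 ≤ K) (m : ℕ)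
    (hm1 : 1 ≤ m) (hpm : p ≤ ((2*m : ℕ) : ℝ))
    (f : (Fin n → Bool) → X)
    (hR : (∑ δ : Fin n → Bool, lpXnorm p
          (fun ε => ∑ j : Fin n, sgn (δ j) • dflipX j (gaux α ((2*(m:ℝ))⁻¹) f) ε) ^ p) / 2 ^ n
        ≤ K ^ p * lpXnorm p (deltaPowX α (gaux α ((2*(m:ℝ))⁻¹) f)) ^ p) :
    lpXnorm 2 (Rad f) ≤ 2 * (m:ℝ) * K * lpXnorm 2 f := by
  have hp0 : (0:ℝ) < p := lt_of_lt_of_le one_pos hp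
  have hm' : (1:ℝ) ≤ (m:ℝ) := by exact_mod_cast hm1
  have hmpos : (0:ℝ) < (m:ℝ) := lt_of_lt_of_le one_pos hm'
  have hmm := master hp hK f hR
  -- left side
  have e1 : lpXnorm p (fun η => ((2:ℝ)*(2*(m:ℝ))⁻¹) • Rad f η)
      = ((m:ℝ))⁻¹ * lpXnorm p (Rad f) := by
    have e0 : ((2:ℝ)*(2*(m:ℝ))⁻¹) = ((m:ℝ))⁻¹ := by
      field_simp
    rw [e0, lpXnorm_smul hp0, abs_of_nonneg (by positivity : (0:ℝ) ≤ ((m:ℝ))⁻¹)]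
  rw [e1] at hmm
  have h2 : lpXnorm p (Tker ((2*(m:ℝ))⁻¹) f) ≤ lpXnorm 2 f := by
    refine le_trans (lpXnorm_le_lpXnorm hp0 hpm (Tker ((2*(m:ℝ))⁻¹) f)) ?_
    exact hyper_vector m hm1 f
  have h3 : lpXnorm 1 f ≤ lpXnorm 2 f :=
    lpXnorm_le_lpXnorm (by norm_num) (by norm_num) f
  have h4 : ((m:ℝ))⁻¹ * lpXnorm p (Rad f) ≤ K * (2 * lpXnorm 2 f) := by
    refine le_trans hmm (mul_le_mul_of_nonneg_left ?_ hK)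
    linarith
  have h5 : lpXnorm 2 (Rad f) ≤ lpXnorm p (Rad f) :=
    lpXnorm_le_lpXnorm (by norm_num) hp2 (Rad f)
  have h6 : ((m:ℝ))⁻¹ * lpXnorm 2 (Rad f) ≤ K * (2 * lpXnorm 2 f) :=
    le_trans (mul_le_mul_of_nonneg_left h5 (by positivity)) h4
  have h7 : lpXnorm 2 (Rad f) = (m:ℝ) * (((m:ℝ))⁻¹ * lpXnorm 2 (Rad f)) := by
    field_simp
  rw [h7]
  calc (m:ℝ) * (((m:ℝ))⁻¹ * lpXnorm 2 (Rad f)) ≤ (m:ℝ) * (K * (2 * lpXnorm 2 f)) :=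
      mul_le_mul_of_nonneg_left h6 (le_of_lt hmpos)
    _ = 2 * (m:ℝ) * K * lpXnorm 2 f := by ring

end Cor43

/-- **Corollary 4.3**: let `p ∈ [1,∞)`, `α ∈ (0,1)`, and let `X` be a Banach space
satisfying the one-sided vector-valued Riesz transform inequality
`2^{-n} Σ_δ ‖Σ_j δ_j (∂_j ⊗ I_X) h‖_{L_p(X)}^p ≤ K^p ‖(Δ_{[n]}^α ⊗ I_X) h‖_{L_p(X)}^p`.
Then `X` is `K`-convex: the vector-valued Rademacher projections
`(Rad ⊗ I_X) h (ε) = Σ_j ε_j ĥ({j})` are bounded on `L_2({-1,1}^n; X)` uniformly in `n`. -/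
theorem one_sided_riesz_implies_K_convex (p : ℝ) (hp : 1 ≤ p) (α : ℝ) (hα0 : 0 < α)
    (hα1 : α < 1)
    {X : Type*} [NormedAddCommGroup X] [NormedSpace ℝ X] [CompleteSpace X]
    (K : ℝ) (hK : 0 < K)
    (hRiesz : ∀ n : ℕ, ∀ h : (Fin n → Bool) → X,
      (∑ δ : Fin n → Bool, lpXnorm p
          (fun ε => ∑ j : Fin n, (if δ j then (1 : ℝ) else -1) • dflipX j h ε) ^ p) /
        2 ^ n ≤
      K ^ p * lpXnorm p (deltaPowX α h) ^ p) :
    ∃ K' : ℝ, 0 < K' ∧ ∀ n : ℕ, ∀ h : (Fin n → Bool) → X,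
      lpXnorm 2 (fun ε => ∑ j : Fin n, (if ε j then (1 : ℝ) else -1) • fourierX h {j}) ≤
        K' * lpXnorm 2 h := by
  classical
  have hm0 : (0:ℝ) ≤ ((⌈p⌉₊ : ℕ) : ℝ) := Nat.cast_nonneg _
  refine ⟨(32 + 2*((⌈p⌉₊ : ℕ) : ℝ)) * K, by positivity, ?_⟩
  intro n f
  have goal_eq : (fun ε => ∑ j : Fin n, (if ε j then (1 : ℝ) else -1) • fourierX f {j})
      = Cor43.Rad f := rfl
  rw [goal_eq]
  have hKle : (0:ℝ) ≤ K := le_of_lt hK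
  rcases le_total p 2 with hp2 | hp2
  · have h := Cor43.branchA hp hp2 hKle f (hRiesz n (Cor43.gaux α 2⁻¹ f))
    refine le_trans h ?_
    refine mul_le_mul_of_nonneg_right ?_ (Cor43.lpXnorm_nonneg 2 f)
    nlinarith [hm0, hKle]
  · have hm1 : 1 ≤ ⌈p⌉₊ := Nat.one_le_ceil_iff.mpr (lt_of_lt_of_le one_pos hp)
    have hpm : p ≤ ((2*⌈p⌉₊ : ℕ) : ℝ) := by
      have h1 : p ≤ ((⌈p⌉₊ : ℕ) : ℝ) := Nat.le_ceil p
      push_cast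
      linarith
    have h := Cor43.branchB hp hp2 hKle ⌈p⌉₊ hm1 hpm f
      (hRiesz n (Cor43.gaux α ((2*((⌈p⌉₊ : ℕ):ℝ))⁻¹) f))
    refine le_trans h ?_
    refine mul_le_mul_of_nonneg_right ?_ (Cor43.lpXnorm_nonneg 2 f)
    nlinarith [hm0, hKle]
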